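/- arXiv:1507.00613 — 9 statements merged into one kernel-verified Lean document; each statement's English description precedes it below -/
import Mathlib

section
/- Let (X,·,d) be a group equipped with a metric d that is invariant, i.e. d(x·y, x·z) = d(y·x, z·x) = d(y,z) for all x,y,z ∈ X. Then for all a,b ∈ X one has γ(a) ⊕ γ(b) = γ(a·b), i.e. for every x ∈ X, inf { d(a,y) + d(b,z) : y·z = x } = d(a·b, x); moreover γ is an isometry for the sup-metric, i.e. sup_{x∈X} |d(a,x) − d(b,x)| = d(a,b) for all a,b ∈ X. Consequently the image X̂ = γ(X) is a group under ⊕ with identity γ(e) and inverse γ(a)⁻¹ = γ(a⁻¹), and γ : X → (X̂, ⊕) is an isometric group isomorphism. -/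
/-- The inf-convolution of two real-valued functions on a set with a
multiplication: `(f ⊕ g)(x) = inf { f y + g z : y * z = x }`. -/
noncomputable def infConv {X : Type*} [Mul X] (f g : X → ℝ) : X → ℝ :=
  fun x => sInf {r : ℝ | ∃ y z : X, y * z = x ∧ r = f y + g z}

/-- The Kuratowski operator `γ(a) = d(a, ·)`. -/
def kur {X : Type*} [MetricSpace X] (a : X) : X → ℝ := fun x => dist a x

lemma infConv_kur {X : Type*} [Group X] [MetricSpace X]
    (hleft : ∀ x y z : X, dist (x * y) (x * z) = dist y z)
    (hright : ∀ x y z : X, dist (y * x) (z * x) = dist y z)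
    (a b : X) : infConv (kur a) (kur b) = kur (a * b) := by
  funext x
  have key : ∀ y z : X, y * z = x → dist (a * b) x ≤ kur a y + kur b z := by
    intro y z h
    subst h
    calc dist (a * b) (y * z) ≤ dist (a * b) (a * z) + dist (a * z) (y * z) :=
          dist_triangle _ _ _
      _ = kur b z + kur a y := by rw [hleft, hright]; rfl
      _ = kur a y + kur b z := add_comm _ _
  apply le_antisymm
  · apply csInf_le
    · exact ⟨dist (a * b) x, fun r ⟨y, z, h, hr⟩ => hr ▸ key y z h⟩
    · refine ⟨a, a⁻¹ * x, by group, ?_⟩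
      show dist (a * b) x = dist a a + dist b (a⁻¹ * x)
      rw [dist_self, zero_add, ← hleft a b (a⁻¹ * x)]
      congr 1
      group
  · exact le_csInf ⟨_, a, a⁻¹ * x, by group, rfl⟩ fun r ⟨y, z, h, hr⟩ => hr ▸ key y z h

/-- For a metric invariant group `X`, the Kuratowski operator satisfies
`γ(a) ⊕ γ(b) = γ(a·b)`, is an isometry for the sup-metric, and hence `X̂ = γ(X)` is a
group under `⊕` (with identity `γ(1)` and inverse `γ(a)⁻¹ = γ(a⁻¹)`) isometrically
isomorphic to `X` via `γ`. -/
theorem kuratowski_isometric_group_iso {X : Type*} [Group X] [MetricSpace X]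
    (hleft : ∀ x y z : X, dist (x * y) (x * z) = dist y z)
    (hright : ∀ x y z : X, dist (y * x) (z * x) = dist y z) :
    (∀ a b : X, infConv (kur a) (kur b) = kur (a * b)) ∧
    (∀ a b : X, (⨆ x : X, |dist a x - dist b x|) = dist a b) ∧
    Function.Injective (fun a : X => kur a) ∧
    (∀ a : X, infConv (kur (1 : X)) (kur a) = kur a ∧ infConv (kur a) (kur (1 : X)) = kur a) ∧
    (∀ a : X, infConv (kur a) (kur a⁻¹) = kur (1 : X) ∧
      infConv (kur a⁻¹) (kur a) = kur (1 : X)) := by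
  have main := infConv_kur hleft hright
  refine ⟨main, ?_, ?_, fun a => ⟨by rw [main]; rw [one_mul],
      by rw [main]; rw [mul_one]⟩,
    fun a => ⟨by rw [main]; rw [mul_inv_cancel], by rw [main]; rw [inv_mul_cancel]⟩⟩
  · intro a b
    have hb : ∀ x : X, |dist a x - dist b x| ≤ dist a b := fun x =>
      abs_dist_sub_le a b x
    apply le_antisymm
    · exact ciSup_le hb
    · have := le_ciSup ⟨dist a b, Set.forall_mem_range.mpr hb⟩ b
      simpa [dist_comm b] using this
  · intro a b h
    have := congrFun h b
    simp only [kur] at this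
    rw [dist_self] at this
    exact dist_eq_zero.mp this
end

section
/- Let (X,d) be a complete metric space, α : X×X → X a map (write y·z for α(y,z)), a ∈ X such that α is d-invariant at a (Δ(a) = {(y,z) : y·z = a} is nonempty and there exist L₁, L₂, L₁', L₂' > 0 with L₂ d(y₁,y₂) ≤ d(y₁·z, y₂·z) ≤ L₁ d(y₁,y₂) for all y₁,y₂ ∈ Δ₁(a), z ∈ Δ₂(a), and L₂' d(z₁,z₂) ≤ d(y·z₁, y·z₂) ≤ L₁' d(z₁,z₂) for all z₁,z₂ ∈ Δ₂(a), y ∈ Δ₁(a)). Let f,g : X → ℝ ∪ {+∞} be proper lower semicontinuous and suppose f ⊕ g has a strong minimum at a. Then there exist ỹ, z̃ ∈ X with ỹ·z̃ = a such that: f(ỹ) + g(z̃) = (f ⊕ g)(a); the map (y,z) ↦ f(y) + g(z), restricted to Δ(a) with the sum metric d((y,z),(y',z')) = d(y,y') + d(z,z'), has a strong minimum at (ỹ,z̃); and for every x ∈ X, f(x) − f(ỹ) ≥ (f ⊕ g)(x·z̃) − (f ⊕ g)(a) and g(x) − g(z̃) ≥ (f ⊕ g)(ỹ·x) − (f ⊕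 g)(a). -/
/-- Inf-convolution with respect to a binary operation `mul`, for functions with
values in `ℝ ∪ {+∞}` (modelled in `EReal`); the infimum of the empty set is `+∞`. -/
noncomputable def infConvE {X : Type*} (mul : X → X → X) (f g : X → EReal) : X → EReal :=
  fun x => sInf {r : EReal | ∃ y z : X, mul y z = x ∧ r = f y + g z}

/-- A function `h : X → ℝ ∪ {+∞}` has a strong minimum at `x₀`: `h x₀` is finite,
is the infimum of `h`, and for every `ε > 0` there is `δ > 0` such that
`h x ≤ h x₀ + δ` implies `d(x, x₀) ≤ ε`. -/
def EStrongMin {X : Type*} [MetricSpace X] (h : X → EReal) (x₀ : X) : Prop :=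
  h x₀ ≠ ⊤ ∧ h x₀ ≠ ⊥ ∧ (∀ x, h x₀ ≤ h x) ∧
    ∀ ε : ℝ, 0 < ε → ∃ δ : ℝ, 0 < δ ∧ ∀ x, h x ≤ h x₀ + (δ : EReal) → dist x x₀ ≤ ε

/-- Auxiliary: a real number bounded by `b + ε` for all positive `ε` is at most `b`. -/
lemma real_le_of_forall_pos_le_add {a b : ℝ} (h : ∀ ε : ℝ, 0 < ε → a ≤ b + ε) : a ≤ b := by
  by_contra hc
  push_neg at hc
  have := h ((a - b) / 2) (by linarith)
  linarith

/-- Auxiliary: realify summands of a finite `EReal` sum. -/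
lemma ereal_real_of_sum_le {u v : EReal} {c : ℝ} (hu : u ≠ ⊥) (hv : v ≠ ⊥)
    (huv : u + v ≤ (c : EReal)) :
    ∃ p q : ℝ, u = (p : EReal) ∧ v = (q : EReal) ∧ p + q ≤ c := by
  have hut : u ≠ ⊤ := by
    rintro rfl
    rw [EReal.top_add_of_ne_bot hv] at huv
    exact (EReal.coe_lt_top c).not_ge (le_top.trans huv)
  have hvt : v ≠ ⊤ := by
    rintro rfl
    rw [EReal.add_top_of_ne_bot hu] at huv
    exact (EReal.coe_lt_top c).not_ge (le_top.trans huv)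
  refine ⟨u.toReal, v.toReal, (EReal.coe_toReal hut hu).symm, (EReal.coe_toReal hvt hv).symm, ?_⟩
  have h2 : ((u.toReal + v.toReal : ℝ) : EReal) ≤ (c : EReal) := by
    rw [EReal.coe_add, EReal.coe_toReal hut hu, EReal.coe_toReal hvt hv]
    exact huv
  exact_mod_cast h2

/-- if `α` is `d`-invariant at `a` and the inf-convolution `f ⊕ g` of two
proper lsc functions has a strong minimum at `a`, then there are `ỹ, z̃` with
`ỹ·z̃ = a`, `f(ỹ) + g(z̃) = (f ⊕ g)(a)`, the map `(y,z) ↦ f(y) + g(z)` restricted to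
`Δ(a)` (equipped with the sum metric) has a strong minimum at `(ỹ, z̃)`, and
`f(x) − f(ỹ) ≥ (f⊕g)(x·z̃) − (f⊕g)(a)`, `g(x) − g(z̃) ≥ (f⊕g)(ỹ·x) − (f⊕g)(a)`
for all `x`. -/
theorem strongMin_infConv_strong_attainment {X : Type*} [MetricSpace X] [CompleteSpace X]
    (α : X → X → X) (a : X)
    (hne : ∃ y z : X, α y z = a)
    (hinv : ∃ L₁ L₂ L₁' L₂' : ℝ, 0 < L₁ ∧ 0 < L₂ ∧ 0 < L₁' ∧ 0 < L₂' ∧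
      (∀ y₁ y₂ z : X, (∃ z', α y₁ z' = a) → (∃ z', α y₂ z' = a) → (∃ y', α y' z = a) →
        L₂ * dist y₁ y₂ ≤ dist (α y₁ z) (α y₂ z) ∧
          dist (α y₁ z) (α y₂ z) ≤ L₁ * dist y₁ y₂) ∧
      (∀ z₁ z₂ y : X, (∃ y', α y' z₁ = a) → (∃ y', α y' z₂ = a) → (∃ z', α y z' = a) →
        L₂' * dist z₁ z₂ ≤ dist (α y z₁) (α y z₂) ∧
          dist (α y z₁) (α y z₂) ≤ L₁' * dist z₁ z₂))
    (f g : X → EReal)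
    (hfbot : ∀ x, f x ≠ ⊥) (hgbot : ∀ x, g x ≠ ⊥)
    (hfproper : ∃ x, f x ≠ ⊤) (hgproper : ∃ x, g x ≠ ⊤)
    (hflsc : LowerSemicontinuous f) (hglsc : LowerSemicontinuous g)
    (hmin : EStrongMin (infConvE α f g) a) :
    ∃ ty tz : X, α ty tz = a ∧
      f ty + g tz = infConvE α f g a ∧
      (∀ y z : X, α y z = a → f ty + g tz ≤ f y + g z) ∧
      (f ty + g tz ≠ ⊤ ∧ f ty + g tz ≠ ⊥) ∧
      (∀ ε : ℝ, 0 < ε → ∃ δ : ℝ, 0 < δ ∧ ∀ y z : X, α y z = a →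
        f y + g z ≤ f ty + g tz + (δ : EReal) → dist y ty + dist z tz ≤ ε) ∧
      (∀ x : X, infConvE α f g (α x tz) - infConvE α f g a ≤ f x - f ty) ∧
      (∀ x : X, infConvE α f g (α ty x) - infConvE α f g a ≤ g x - g tz) := by
  classical
  obtain ⟨L₁, L₂, L₁', L₂', hL₁, hL₂, hL₁', hL₂', hiy, hiz⟩ := hinv
  obtain ⟨hTop, hBot, hlow, hsm⟩ := hmin
  set h : X → EReal := infConvE α f g with hh
  obtain ⟨r, hr⟩ : ∃ r : ℝ, h a = (r : EReal) :=
    ⟨(h a).toReal, (EReal.coe_toReal hTop hBot).symm⟩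
  have hx_le : ∀ x y z : X, α y z = x → h x ≤ f y + g z := fun x y z hyz =>
    sInf_le ⟨y, z, hyz, rfl⟩
  -- core proximity estimate
  have core : ∀ ε₀ δ : ℝ, 0 < δ →
      (∀ x, h x ≤ h a + (δ : EReal) → dist x a ≤ ε₀) →
      ∀ y z y' z' : X, α y z = a → α y' z' = a →
      f y + g z ≤ ((r + δ / 2 : ℝ) : EReal) → f y' + g z' ≤ ((r + δ / 2 : ℝ) : EReal) →
      L₂ * dist y y' ≤ ε₀ ∧ L₂' * dist z z' ≤ ε₀ := by
    intro ε₀ δ hδ hsm' y z y' z' hyz hy'z' h1 h2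
    obtain ⟨p, q, hp, hq, hpq⟩ := ereal_real_of_sum_le (hfbot y) (hgbot z) h1
    obtain ⟨p', q', hp', hq', hpq'⟩ := ereal_real_of_sum_le (hfbot y') (hgbot z') h2
    have hcases : p + q' ≤ r + δ ∨ p' + q ≤ r + δ := by
      by_contra hcon
      push_neg at hcon
      obtain ⟨hc1, hc2⟩ := hcon
      linarith
    rcases hcases with hc | hc
    · have hb : h (α y z') ≤ h a + (δ : EReal) := by
        refine (hx_le _ _ _ rfl).trans ?_
        rw [hp, hq', hr, ← EReal.coe_add, ← EReal.coe_add]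
        exact EReal.coe_le_coe_iff.2 hc
      have hd := hsm' _ hb
      constructor
      · have hy1 := (hiy y y' z' ⟨z, hyz⟩ ⟨z', hy'z'⟩ ⟨y', hy'z'⟩).1
        rw [hy'z'] at hy1
        exact hy1.trans hd
      · have hz1 := (hiz z' z y ⟨y', hy'z'⟩ ⟨y, hyz⟩ ⟨z, hyz⟩).1
        rw [hyz] at hz1
        rw [dist_comm z z']
        exact hz1.trans hd
    · have hb : h (α y' z) ≤ h a + (δ : EReal) := by
        refine (hx_le _ _ _ rfl).trans ?_
        rw [hp', hq, hr, ← EReal.coe_add, ← EReal.coe_add]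
        exact EReal.coe_le_coe_iff.2 hc
      have hd := hsm' _ hb
      constructor
      · have hy1 := (hiy y' y z ⟨z', hy'z'⟩ ⟨z, hyz⟩ ⟨y, hyz⟩).1
        rw [hyz] at hy1
        rw [dist_comm y y']
        exact hy1.trans hd
      · have hz1 := (hiz z z' y' ⟨y, hyz⟩ ⟨y', hy'z'⟩ ⟨z', hy'z'⟩).1
        rw [hy'z'] at hz1
        exact hz1.trans hd
  -- a minimizing sequence
  have hseq : ∀ n : ℕ, ∃ y z : X, α y z = a ∧
      f y + g z ≤ ((r + 1 / (n + 1) : ℝ) : EReal) := by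
    intro n
    have hpos : (0 : ℝ) < 1 / (n + 1) := by positivity
    have hlt2 : h a < ((r + 1 / (n + 1) : ℝ) : EReal) := by
      rw [hr]
      exact EReal.coe_lt_coe_iff.2 (by linarith)
    have hlt3 : sInf {w : EReal | ∃ y z : X, α y z = a ∧ w = f y + g z} <
        ((r + 1 / (n + 1) : ℝ) : EReal) := hlt2
    obtain ⟨w, ⟨y, z, hyz, rfl⟩, hw⟩ := sInf_lt_iff.1 hlt3
    exact ⟨y, z, hyz, hw.le⟩
  choose Y Z hYZ hYZle using hseq
  have hmono : ∀ N n : ℕ, N ≤ n → (1 / (n + 1 : ℝ)) ≤ 1 / (N + 1) := by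
    intro N n hNn
    have : (N : ℝ) ≤ n := Nat.cast_le.2 hNn
    apply one_div_le_one_div_of_le (by positivity)
    linarith
  -- Cauchyness
  have hkey : ∀ ε : ℝ, 0 < ε → ∃ N : ℕ, ∀ m, N ≤ m → ∀ n, N ≤ n →
      dist (Y m) (Y n) < ε ∧ dist (Z m) (Z n) < ε := by
    intro ε hε
    have hminpos : 0 < min L₂ L₂' := lt_min hL₂ hL₂'
    have hε₀ : 0 < (ε / 2) * min L₂ L₂' := by positivity
    obtain ⟨δ, hδ, hδprop⟩ := hsm _ hε₀
    obtain ⟨N, hN⟩ := exists_nat_one_div_lt (half_pos hδ)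
    refine ⟨N, fun m hm n hn => ?_⟩
    have hb : ∀ k, N ≤ k → f (Y k) + g (Z k) ≤ ((r + δ / 2 : ℝ) : EReal) := by
      intro k hk
      refine (hYZle k).trans (EReal.coe_le_coe_iff.2 ?_)
      have := hmono N k hk
      linarith
    obtain ⟨hy, hz⟩ := core _ δ hδ hδprop (Y m) (Z m) (Y n) (Z n) (hYZ m) (hYZ n)
      (hb m hm) (hb n hn)
    constructor
    · have h1 : L₂ * dist (Y m) (Y n) ≤ L₂ * (ε / 2) := by
        refine hy.trans ?_
        calc (ε / 2) * min L₂ L₂' ≤ (ε / 2) * L₂ :=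
              mul_le_mul_of_nonneg_left (min_le_left _ _) (by linarith)
          _ = L₂ * (ε / 2) := mul_comm _ _
      have := le_of_mul_le_mul_left h1 hL₂
      linarith
    · have h1 : L₂' * dist (Z m) (Z n) ≤ L₂' * (ε / 2) := by
        refine hz.trans ?_
        calc (ε / 2) * min L₂ L₂' ≤ (ε / 2) * L₂' :=
              mul_le_mul_of_nonneg_left (min_le_right _ _) (by linarith)
          _ = L₂' * (ε / 2) := mul_comm _ _
      have := le_of_mul_le_mul_left h1 hL₂'
      linarith
  have hYc : CauchySeq Y := Metric.cauchySeq_iff.2 fun ε hε => by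
    obtain ⟨N, hN⟩ := hkey ε hε
    exact ⟨N, fun m hm n hn => (hN m hm n hn).1⟩
  have hZc : CauchySeq Z := Metric.cauchySeq_iff.2 fun ε hε => by
    obtain ⟨N, hN⟩ := hkey ε hε
    exact ⟨N, fun m hm n hn => (hN m hm n hn).2⟩
  obtain ⟨ty, hty⟩ := cauchySeq_tendsto_of_complete hYc
  obtain ⟨tz, htz⟩ := cauchySeq_tendsto_of_complete hZc
  -- value at the limit
  have claim1 : ∀ c c' : ℝ, (c : EReal) < f ty → (c' : EReal) < g tz → c + c' ≤ r := by
    intro c c' hc hc'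
    refine real_le_of_forall_pos_le_add fun ε hε => ?_
    obtain ⟨N, hN⟩ := exists_nat_one_div_lt hε
    have hev : ∀ᶠ n in Filter.atTop,
        ((c : EReal) < f (Y n) ∧ (c' : EReal) < g (Z n)) ∧ N ≤ n :=
      ((hty.eventually (hflsc ty _ hc)).and (htz.eventually (hglsc tz _ hc'))).and
        (Filter.eventually_atTop.2 ⟨N, fun n hn => hn⟩)
    obtain ⟨n, ⟨hcn, hc'n⟩, hNn⟩ := hev.exists
    have h2 : ((c + c' : ℝ) : EReal) ≤ ((r + 1 / (n + 1) : ℝ) : EReal) := by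
      rw [EReal.coe_add]
      exact (add_le_add hcn.le hc'n.le).trans (hYZle n)
    have h3 : c + c' ≤ r + 1 / (n + 1) := EReal.coe_le_coe_iff.1 h2
    have h4 := hmono N n hNn
    linarith
  have hfty_ne_top : f ty ≠ ⊤ := by
    intro htop
    obtain ⟨c', hc'1, hc'2⟩ :=
      EReal.exists_between_coe_real (bot_lt_iff_ne_bot.2 (hgbot tz))
    have := claim1 (r - c' + 1) c' (htop ▸ EReal.coe_lt_top _) hc'2
    linarith
  have hgtz_ne_top : g tz ≠ ⊤ := by
    intro htop
    obtain ⟨c, hc1, hc2⟩ :=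
      EReal.exists_between_coe_real (bot_lt_iff_ne_bot.2 (hfbot ty))
    have := claim1 c (r - c + 1) hc2 (htop ▸ EReal.coe_lt_top _)
    linarith
  obtain ⟨p, hp⟩ : ∃ p : ℝ, f ty = (p : EReal) :=
    ⟨_, (EReal.coe_toReal hfty_ne_top (hfbot ty)).symm⟩
  obtain ⟨q, hq⟩ : ∃ q : ℝ, g tz = (q : EReal) :=
    ⟨_, (EReal.coe_toReal hgtz_ne_top (hgbot tz)).symm⟩
  have hpq : p + q ≤ r := by
    refine real_le_of_forall_pos_le_add fun ε hε => ?_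
    have h1 : ((p - ε / 2 : ℝ) : EReal) < f ty := by
      rw [hp]; exact EReal.coe_lt_coe_iff.2 (by linarith)
    have h2 : ((q - ε / 2 : ℝ) : EReal) < g tz := by
      rw [hq]; exact EReal.coe_lt_coe_iff.2 (by linarith)
    have := claim1 _ _ h1 h2
    linarith
  have hfg_le : f ty + g tz ≤ h a := by
    rw [hp, hq, hr, ← EReal.coe_add]
    exact EReal.coe_le_coe_iff.2 hpq
  have habc : α ty tz = a := by
    have hba : h (α ty tz) ≤ h a := (hx_le _ _ _ rfl).trans hfg_le
    have hdist : ∀ ε : ℝ, 0 < ε → dist (α ty tz) a ≤ ε := by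
      intro ε hε
      obtain ⟨δ, hδ, hδprop⟩ := hsm ε hε
      refine hδprop _ (hba.trans ?_)
      rw [hr, ← EReal.coe_add]
      exact EReal.coe_le_coe_iff.2 (by linarith)
    have h0 : dist (α ty tz) a ≤ 0 :=
      real_le_of_forall_pos_le_add fun ε hε => by
        simpa using hdist ε hε
    exact dist_le_zero.1 h0
  have heq : f ty + g tz = h a := le_antisymm hfg_le (hx_le a ty tz habc)
  refine ⟨ty, tz, habc, heq, fun y z hyz => heq ▸ hx_le a y z hyz,
    ⟨heq ▸ hTop, heq ▸ hBot⟩, ?_, ?_, ?_⟩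
  · -- strong minimum on Δ(a)
    intro ε hε
    have hminpos : 0 < min L₂ L₂' := lt_min hL₂ hL₂'
    have hε₀ : 0 < (ε / 2) * min L₂ L₂' := by positivity
    obtain ⟨δ, hδ, hδprop⟩ := hsm _ hε₀
    refine ⟨δ / 2, half_pos hδ, fun y z hyz hle => ?_⟩
    have h1 : f y + g z ≤ ((r + δ / 2 : ℝ) : EReal) := by
      refine hle.trans ?_
      rw [heq, hr, ← EReal.coe_add]
    have h2 : f ty + g tz ≤ ((r + δ / 2 : ℝ) : EReal) := by
      rw [heq, hr]
      exact EReal.coe_le_coe_iff.2 (by linarith)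
    obtain ⟨hy, hz⟩ := core _ δ hδ hδprop y z ty tz hyz habc h1 h2
    have d1 : dist y ty ≤ ε / 2 := by
      have h3 : L₂ * dist y ty ≤ L₂ * (ε / 2) := by
        refine hy.trans ?_
        calc (ε / 2) * min L₂ L₂' ≤ (ε / 2) * L₂ :=
              mul_le_mul_of_nonneg_left (min_le_left _ _) (by linarith)
          _ = L₂ * (ε / 2) := mul_comm _ _
      exact le_of_mul_le_mul_left h3 hL₂
    have d2 : dist z tz ≤ ε / 2 := by
      have h3 : L₂' * dist z tz ≤ L₂' * (ε / 2) := by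
        refine hz.trans ?_
        calc (ε / 2) * min L₂ L₂' ≤ (ε / 2) * L₂' :=
              mul_le_mul_of_nonneg_left (min_le_right _ _) (by linarith)
          _ = L₂' * (ε / 2) := mul_comm _ _
      exact le_of_mul_le_mul_left h3 hL₂'
    linarith
  · -- first subdifferential-type inequality
    intro x
    rcases eq_or_ne (f x) ⊤ with hfx | hfx
    · rw [hfx, hp, EReal.top_sub_coe]
      exact le_top
    · obtain ⟨u, hu⟩ : ∃ u : ℝ, f x = (u : EReal) :=
        ⟨_, (EReal.coe_toReal hfx (hfbot x)).symm⟩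
      have h1 : h (α x tz) ≤ ((u + q : ℝ) : EReal) := by
        rw [EReal.coe_add, ← hu, ← hq]
        exact hx_le _ _ _ rfl
      rw [hr, hu, hp]
      calc h (α x tz) - (r : EReal) ≤ ((u + q : ℝ) : EReal) - (r : EReal) :=
            EReal.sub_le_sub h1 le_rfl
        _ = ((u + q - r : ℝ) : EReal) := (EReal.coe_sub _ _).symm
        _ ≤ ((u - p : ℝ) : EReal) := EReal.coe_le_coe_iff.2 (by linarith)
        _ = (u : EReal) - (p : EReal) := EReal.coe_sub _ _
  · -- second subdifferential-type inequality
    intro x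
    rcases eq_or_ne (g x) ⊤ with hgx | hgx
    · rw [hgx, hq, EReal.top_sub_coe]
      exact le_top
    · obtain ⟨v, hv⟩ : ∃ v : ℝ, g x = (v : EReal) :=
        ⟨_, (EReal.coe_toReal hgx (hgbot x)).symm⟩
      have h1 : h (α ty x) ≤ ((p + v : ℝ) : EReal) := by
        rw [EReal.coe_add, ← hv, ← hp]
        exact hx_le _ _ _ rfl
      rw [hr, hv, hq]
      calc h (α ty x) - (r : EReal) ≤ ((p + v : ℝ) : EReal) - (r : EReal) :=
            EReal.sub_le_sub h1 le_rfl
        _ = ((p + v - r : ℝ) : EReal) := (EReal.coe_sub _ _).symm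
        _ ≤ ((v - q : ℝ) : EReal) := EReal.coe_le_coe_iff.2 (by linarith)
        _ = (v : EReal) - (q : EReal) := EReal.coe_sub _ _
end

section
/- Let (X,·,d) be a group which is complete and metric invariant, with identity element e. Let f and g be two 1-Lipschitz real-valued functions on X. Then f ⊕ g = d(e,·) if and only if there exist ỹ ∈ X and c ∈ ℝ such that f = d(ỹ,·) + c and g = d(ỹ⁻¹,·) − c. -/
/-- on a complete metric invariant group with identity `1`, for two
1-Lipschitz functions `f, g`, one has `f ⊕ g = d(1,·)` (inf-convolution computed in
`EReal`) iff there are `ỹ ∈ X` and `c ∈ ℝ` with `f = d(ỹ,·) + c` and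
`g = d(ỹ⁻¹,·) − c`. -/
theorem infConv_eq_kuratowski_one_iff {X : Type*} [Group X] [MetricSpace X] [CompleteSpace X]
    (hleft : ∀ x y z : X, dist (x * y) (x * z) = dist y z)
    (hright : ∀ x y z : X, dist (y * x) (z * x) = dist y z)
    (f g : X → ℝ)
    (hf : ∀ x y : X, |f x - f y| ≤ dist x y)
    (hg : ∀ x y : X, |g x - g y| ≤ dist x y) :
    (∀ x : X, sInf {r : EReal | ∃ y z : X, y * z = x ∧ r = ((f y + g z : ℝ) : EReal)}
        = ((dist (1 : X) x : ℝ) : EReal)) ↔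
      ∃ (ty : X) (c : ℝ), (∀ x : X, f x = dist ty x + c) ∧
        (∀ x : X, g x = dist ty⁻¹ x - c) := by
  -- helper identities
  have d1 : ∀ a b : X, dist a b = dist 1 (b * a⁻¹) := by
    intro a b
    simpa using hright a 1 (b * a⁻¹)
  have d2 : ∀ a b : X, dist a⁻¹ b = dist 1 (a * b) := by
    intro a b
    simpa using hleft a⁻¹ 1 (a * b)
  have dinv : ∀ a b : X, dist a⁻¹ b⁻¹ = dist a b := by
    intro a b
    rw [d2 a b⁻¹, ← d1 b a, dist_comm]
  have dtri : ∀ (ty y z : X), dist 1 (y * z) ≤ dist ty y + dist ty⁻¹ z := by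
    intro ty y z
    have h1 : dist 1 (y * z) ≤ dist 1 (y * ty⁻¹) + dist (y * ty⁻¹) (y * z) := dist_triangle _ _ _
    have h2 : dist (y * ty⁻¹) (y * z) = dist ty⁻¹ z := hleft y ty⁻¹ z
    have h3 : dist ty y = dist 1 (y * ty⁻¹) := d1 ty y
    linarith
  constructor
  · intro h
    -- key inequality
    have key : ∀ y z : X, dist (1:X) (y*z) ≤ f y + g z := by
      intro y z
      have h1 : ((f y + g z : ℝ) : EReal) ∈
          {r : EReal | ∃ y' z' : X, y' * z' = y*z ∧ r = ((f y' + g z' : ℝ) : EReal)} :=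
        ⟨y, z, rfl, rfl⟩
      have h2 := sInf_le h1
      rw [h (y*z)] at h2
      exact_mod_cast h2
    -- minimizing sequence
    have exmin : ∀ n : ℕ, ∃ y : X, f y + g y⁻¹ ≤ 1 / (n+1) := by
      intro n
      have hpos : (0:ℝ) < 1 / (n+1) := by positivity
      have hlt : sInf {r : EReal | ∃ y z : X, y * z = (1:X) ∧ r = ((f y + g z : ℝ) : EReal)}
          < ((1 / (n+1:ℝ) : ℝ) : EReal) := by
        rw [h 1]
        simp only [dist_self]
        exact_mod_cast hpos
      obtain ⟨r, ⟨y, z, hyz, rfl⟩, hr⟩ := sInf_lt_iff.mp hlt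
      have hz : z = y⁻¹ := by
        rw [← inv_eq_of_mul_eq_one_right hyz]
      subst hz
      exact ⟨y, le_of_lt (by exact_mod_cast hr)⟩
    choose u hu using exmin
    obtain ⟨ε, hε⟩ : ∃ ε : ℕ → ℝ, ∀ n, ε n = f (u n) + g ((u n)⁻¹) := ⟨_, fun _ => rfl⟩
    have hε0 : ∀ n, 0 ≤ ε n := by
      intro n
      rw [hε]
      have := key (u n) ((u n)⁻¹)
      simpa using this
    have hεle : ∀ n, ε n ≤ 1 / (n+1) := by intro n; rw [hε]; exact hu n
    -- pointwise bounds for f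
    have fub : ∀ (n : ℕ) (x : X), f x ≤ dist (u n) x + f (u n) := by
      intro n x
      have h1 := hf x (u n)
      rw [abs_le] at h1
      have h2 : dist x (u n) = dist (u n) x := dist_comm _ _
      linarith [h1.2]
    have flb : ∀ (n : ℕ) (x : X), dist (u n) x + f (u n) - ε n ≤ f x := by
      intro n x
      have h1 := key x ((u n)⁻¹)
      have h2 : dist (1:X) (x * (u n)⁻¹) = dist (u n) x := (d1 (u n) x).symm
      rw [h2] at h1
      rw [hε]
      linarith
    -- pointwise bounds for g
    have gub : ∀ (n : ℕ) (z : X), g z ≤ dist ((u n)⁻¹) z - f (u n) + ε n := by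
      intro n z
      have h1 := hg z ((u n)⁻¹)
      rw [abs_le] at h1
      have h2 : dist z ((u n)⁻¹) = dist ((u n)⁻¹) z := dist_comm _ _
      rw [hε]
      linarith [h1.2]
    have glb : ∀ (n : ℕ) (z : X), dist ((u n)⁻¹) z - f (u n) ≤ g z := by
      intro n z
      have h1 := key (u n) z
      have h2 : dist ((u n)⁻¹) z = dist (1:X) (u n * z) := d2 (u n) z
      linarith
    -- Cauchy
    have hcauchy : CauchySeq u := by
      rw [Metric.cauchySeq_iff]
      intro δ hδ
      obtain ⟨N, hN⟩ := exists_nat_one_div_lt (show (0:ℝ) < δ by linarith)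
      refine ⟨N, fun m hm n hn => ?_⟩
      have b1 : dist (u n) (u m) ≤ f (u m) + g ((u n)⁻¹) := by
        have := key (u m) ((u n)⁻¹)
        rw [← d1 (u n) (u m)] at this
        exact this
      have b2 : dist (u m) (u n) ≤ f (u n) + g ((u m)⁻¹) := by
        have := key (u n) ((u m)⁻¹)
        rw [← d1 (u m) (u n)] at this
        exact this
      have b3 : dist (u m) (u n) = dist (u n) (u m) := dist_comm _ _
      have hεn : ε n ≤ 1 / (N+1) := le_trans (hεle n) (by
        apply one_div_le_one_div_of_le (by positivity)
        have : (N:ℝ) ≤ n := by exact_mod_cast hn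
        linarith)
      have hεm : ε m ≤ 1 / (N+1) := le_trans (hεle m) (by
        apply one_div_le_one_div_of_le (by positivity)
        have : (N:ℝ) ≤ m := by exact_mod_cast hm
        linarith)
      have : 2 * dist (u m) (u n) ≤ ε n + ε m := by
        rw [hε, hε]
        linarith
      calc dist (u m) (u n) ≤ (ε n + ε m) / 2 := by linarith
        _ ≤ 1 / (N+1) := by linarith
        _ < δ := hN
    obtain ⟨ty, hty⟩ := cauchySeq_tendsto_of_complete hcauchy
    have htyinv : Filter.Tendsto (fun n => (u n)⁻¹) Filter.atTop (nhds ty⁻¹) := by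
      rw [tendsto_iff_dist_tendsto_zero]
      simp only [dinv]
      exact tendsto_iff_dist_tendsto_zero.mp hty
    have hfc : Continuous f := by
      apply LipschitzWith.continuous (K := 1)
      intro a b
      rw [edist_dist, edist_dist]
      have h1 := hf a b
      rw [ENNReal.coe_one, one_mul]
      apply ENNReal.ofReal_le_ofReal
      rw [Real.dist_eq]
      exact h1
    have hεlim : Filter.Tendsto ε Filter.atTop (nhds 0) := by
      apply squeeze_zero hε0 hεle
      exact tendsto_one_div_add_atTop_nhds_zero_nat
    refine ⟨ty, f ty, ?_, ?_⟩
    · intro x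
      have hA : Filter.Tendsto (fun n => dist (u n) x + f (u n)) Filter.atTop
          (nhds (dist ty x + f ty)) :=
        Filter.Tendsto.add (hty.dist tendsto_const_nhds) (hfc.continuousAt.tendsto.comp hty)
      have hdiff : Filter.Tendsto (fun n => f x - (dist (u n) x + f (u n))) Filter.atTop
          (nhds 0) := by
        apply squeeze_zero_norm (a := ε) (fun n => ?_) hεlim
        show ‖f x - (dist (u n) x + f (u n))‖ ≤ ε n
        rw [Real.norm_eq_abs, abs_le]
        constructor
        · have := flb n x; linarith
        · have := fub n x; have := hε0 n; linarith
      have : Filter.Tendsto (fun _ : ℕ => f x) Filter.atTop (nhds (0 + (dist ty x + f ty))) := by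
        have := hdiff.add hA
        simpa using this
      have := tendsto_nhds_unique tendsto_const_nhds this
      linarith [this]
    · intro z
      have hB : Filter.Tendsto (fun n => dist ((u n)⁻¹) z - f (u n)) Filter.atTop
          (nhds (dist ty⁻¹ z - f ty)) :=
        Filter.Tendsto.sub (htyinv.dist tendsto_const_nhds) (hfc.continuousAt.tendsto.comp hty)
      have hdiff : Filter.Tendsto (fun n => g z - (dist ((u n)⁻¹) z - f (u n))) Filter.atTop
          (nhds 0) := by
        apply squeeze_zero_norm (a := ε) (fun n => ?_) hεlim
        show ‖g z - (dist ((u n)⁻¹) z - f (u n))‖ ≤ ε n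
        rw [Real.norm_eq_abs, abs_le]
        constructor
        · have h1 := glb n z
          have h2 := hε0 n
          linarith
        · have h1 := gub n z
          linarith
      have : Filter.Tendsto (fun _ : ℕ => g z) Filter.atTop (nhds (0 + (dist ty⁻¹ z - f ty))) := by
        have := hdiff.add hB
        simpa using this
      have := tendsto_nhds_unique tendsto_const_nhds this
      linarith [this]
  · rintro ⟨ty, c, hF, hG⟩ x
    apply le_antisymm
    · have hmem : ((f ty + g (ty⁻¹ * x) : ℝ) : EReal) ∈
          {r : EReal | ∃ y z : X, y * z = x ∧ r = ((f y + g z : ℝ) : EReal)} :=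
        ⟨ty, ty⁻¹ * x, mul_inv_cancel_left ty x, rfl⟩
      have hval : f ty + g (ty⁻¹ * x) = dist (1:X) x := by
        rw [hF ty, hG (ty⁻¹ * x), dist_self]
        have : dist ty⁻¹ (ty⁻¹ * x) = dist (1:X) x := by
          simpa using hleft ty⁻¹ 1 x
        rw [this]
        ring
      have := sInf_le hmem
      rw [hval] at this
      exact this
    · apply le_sInf
      rintro r ⟨y, z, hyz, rfl⟩
      subst hyz
      rw [EReal.coe_le_coe_iff]
      rw [hF y, hG z]
      have := dtri ty y z
      linarith
end

section
/- Let (X,·,d) be a group which is complete and metric invariant, with identity element e. Then (Lip¹(X), ⊕), the set of 1-Lipschitz bounded-below real functions with the inf-convolution, is a monoid with identity element γ(e) = d(e,·), and a function f ∈ Lip¹(X) is invertible in this monoid (i.e. there exists g ∈ Lip¹(X) with f ⊕ g = g ⊕ f = γ(e)) if and only if there exist a ∈ X and c ∈ ℝ such that f = d(a,·) + c. -/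
/-- The set `Lip¹(X)` of 1-Lipschitz bounded-below real-valued functions. -/
def LipOne (X : Type*) [MetricSpace X] : Set (X → ℝ) :=
  {f | (∀ x y, |f x - f y| ≤ dist x y) ∧ BddBelow (Set.range f)}

section aux

variable {X : Type*} [Group X] [MetricSpace X]

lemma infConv_le {f g : X → ℝ} (hf : BddBelow (Set.range f)) (hg : BddBelow (Set.range g))
    {x y z : X} (h : y * z = x) : infConv f g x ≤ f y + g z := by
  obtain ⟨cf, hcf⟩ := hf
  obtain ⟨cg, hcg⟩ := hg
  refine csInf_le ⟨cf + cg, ?_⟩ ⟨y, z, h, rfl⟩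
  rintro r ⟨y', z', -, rfl⟩
  exact add_le_add (hcf ⟨y', rfl⟩) (hcg ⟨z', rfl⟩)

lemma le_infConv {f g : X → ℝ} {x : X} {r : ℝ}
    (h : ∀ y z : X, y * z = x → r ≤ f y + g z) : r ≤ infConv f g x := by
  refine le_csInf ⟨f 1 + g x, 1, x, one_mul x, rfl⟩ ?_
  rintro s ⟨y, z, hyz, rfl⟩
  exact h y z hyz

lemma infConv_mem (hleft : ∀ x y z : X, dist (x * y) (x * z) = dist y z)
    {f g : X → ℝ} (hf : f ∈ LipOne X) (hg : g ∈ LipOne X) : infConv f g ∈ LipOne X := by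
  obtain ⟨hf1, cf, hcf⟩ := hf
  obtain ⟨hg1, cg, hcg⟩ := hg
  have hbf : BddBelow (Set.range f) := ⟨cf, hcf⟩
  have hbg : BddBelow (Set.range g) := ⟨cg, hcg⟩
  have key : ∀ x x' : X, infConv f g x ≤ infConv f g x' + dist x x' := by
    intro x x'
    rw [← sub_le_iff_le_add]
    refine le_infConv ?_
    intro y z hyz
    have h1 : infConv f g x ≤ f y + g (y⁻¹ * x) := infConv_le hbf hbg (mul_inv_cancel_left y x)
    have hz : z = y⁻¹ * x' := by rw [← hyz]; group
    have h2 : g (y⁻¹ * x) - g z ≤ dist x x' := by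
      rw [hz]
      calc g (y⁻¹ * x) - g (y⁻¹ * x') ≤ |g (y⁻¹ * x) - g (y⁻¹ * x')| := le_abs_self _
        _ ≤ dist (y⁻¹ * x) (y⁻¹ * x') := hg1 _ _
        _ = dist x x' := hleft y⁻¹ x x'
    linarith
  constructor
  · intro x x'
    rw [abs_sub_le_iff]
    constructor
    · linarith [key x x']
    · have := key x' x; rw [dist_comm] at this; linarith
  · refine ⟨cf + cg, ?_⟩
    rintro r ⟨x, rfl⟩
    exact le_infConv fun y z _ => add_le_add (hcf ⟨y, rfl⟩) (hcg ⟨z, rfl⟩)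

lemma infConv_assoc (hleft : ∀ x y z : X, dist (x * y) (x * z) = dist y z)
    {f g h : X → ℝ} (hf : f ∈ LipOne X) (hg : g ∈ LipOne X) (hh : h ∈ LipOne X) :
    infConv (infConv f g) h = infConv f (infConv g h) := by
  have hfg := infConv_mem hleft hf hg
  have hgh := infConv_mem hleft hg hh
  funext x
  apply le_antisymm
  · refine le_infConv fun y v hyv => ?_
    rw [← sub_le_iff_le_add']
    refine le_infConv fun z w hzw => ?_
    rw [sub_le_iff_le_add']
    have hx : (y * z) * w = x := by rw [mul_assoc, hzw, hyv]
    calc infConv (infConv f g) h x ≤ infConv f g (y * z) + h w := infConv_le hfg.2 hh.2 hx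
      _ ≤ (f y + g z) + h w := add_le_add_left (infConv_le hf.2 hg.2 rfl) _
      _ = f y + (g z + h w) := by ring
  · refine le_infConv fun u w huw => ?_
    rw [← sub_le_iff_le_add]
    refine le_infConv fun y z hyz => ?_
    rw [sub_le_iff_le_add]
    have hx : y * (z * w) = x := by rw [← mul_assoc, hyz, huw]
    calc infConv f (infConv g h) x ≤ f y + infConv g h (z * w) := infConv_le hf.2 hgh.2 hx
      _ ≤ f y + (g z + h w) := add_le_add_right (infConv_le hg.2 hh.2 rfl) _
      _ = (f y + g z) + h w := by ring

lemma gamma_bdd : BddBelow (Set.range (fun x : X => dist (1 : X) x)) := by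
  refine ⟨0, ?_⟩
  rintro r ⟨x, rfl⟩
  exact dist_nonneg

lemma dist_inv_eq (hleft : ∀ x y z : X, dist (x * y) (x * z) = dist y z)
    (hright : ∀ x y z : X, dist (y * x) (z * x) = dist y z)
    (u v : X) : dist u⁻¹ v⁻¹ = dist u v := by
  calc dist u⁻¹ v⁻¹ = dist (v * u⁻¹) (v * v⁻¹) := (hleft v u⁻¹ v⁻¹).symm
    _ = dist (v * u⁻¹) 1 := by rw [mul_inv_cancel]
    _ = dist ((v * u⁻¹) * u) (1 * u) := (hright u _ _).symm
    _ = dist v u := by rw [inv_mul_cancel_right, one_mul]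
    _ = dist u v := dist_comm _ _

end aux

/-- on a complete metric invariant group, `(Lip¹(X), ⊕)` is a monoid with
identity `γ(1) = d(1,·)`, and `f ∈ Lip¹(X)` is invertible in this monoid iff
`f = d(a,·) + c` for some `a ∈ X`, `c ∈ ℝ`. -/
theorem lipOne_monoid_units {X : Type*} [Group X] [MetricSpace X] [CompleteSpace X]
    (hleft : ∀ x y z : X, dist (x * y) (x * z) = dist y z)
    (hright : ∀ x y z : X, dist (y * x) (z * x) = dist y z) :
    (∀ f ∈ LipOne X, ∀ g ∈ LipOne X, infConv f g ∈ LipOne X) ∧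
    (∀ f ∈ LipOne X, ∀ g ∈ LipOne X, ∀ h ∈ LipOne X,
       infConv (infConv f g) h = infConv f (infConv g h)) ∧
    (∀ f ∈ LipOne X,
       infConv (fun x => dist (1 : X) x) f = f ∧ infConv f (fun x => dist (1 : X) x) = f) ∧
    (∀ f ∈ LipOne X,
       (∃ g ∈ LipOne X, infConv f g = (fun x => dist (1 : X) x) ∧
          infConv g f = (fun x => dist (1 : X) x)) ↔
       ∃ (a : X) (c : ℝ), ∀ x, f x = dist a x + c) := by
  refine ⟨fun f hf g hg => infConv_mem hleft hf hg,
    fun f hf g hg h hh => infConv_assoc hleft hf hg hh, ?_, ?_⟩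
  · -- identity
    intro f hf
    constructor
    · funext x
      apply le_antisymm
      · have := infConv_le gamma_bdd hf.2 (one_mul x)
        simpa using this
      · refine le_infConv fun y z hyz => ?_
        have h1 : f x - f z ≤ dist x z := le_trans (le_abs_self _) (hf.1 x z)
        have h2 : dist x z = dist (1 : X) y := by
          rw [← hyz, ← hright z 1 y, one_mul, dist_comm]
        rw [h2] at h1
        linarith
    · funext x
      apply le_antisymm
      · have := infConv_le hf.2 gamma_bdd (mul_one x)
        simpa using this
      · refine le_infConv fun y z hyz => ?_
        have h1 : f x - f y ≤ dist x y := le_trans (le_abs_self _) (hf.1 x y)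
        have h2 : dist x y = dist (1 : X) z := by
          rw [← hyz, ← hleft y 1 z, mul_one, dist_comm]
        rw [h2] at h1
        linarith
  · -- units
    intro f hf
    constructor
    · rintro ⟨g, hg, hfg, hgf⟩
      have hkey : ∀ y z : X, dist (1 : X) (y * z) ≤ f y + g z := by
        intro y z
        have : infConv f g (y * z) ≤ f y + g z := infConv_le hf.2 hg.2 rfl
        rw [hfg] at this; exact this
      have hex : ∀ n : ℕ, ∃ y : X, f y + g y⁻¹ < 1 / (n + 1) := by
        intro n
        have h0 : infConv f g 1 = 0 := by rw [hfg]; simp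
        have hlt : sInf {r : ℝ | ∃ y z : X, y * z = (1 : X) ∧ r = f y + g z} < 1 / (n + 1) := by
          have : infConv f g 1 < 1 / (n + 1) := by rw [h0]; positivity
          exact this
        have hne : Set.Nonempty {r : ℝ | ∃ y z : X, y * z = (1 : X) ∧ r = f y + g z} :=
          ⟨f 1 + g 1, 1, 1, one_mul 1, rfl⟩
        obtain ⟨r, ⟨y, z, hyz, rfl⟩, hr⟩ := exists_lt_of_csInf_lt hne hlt
        have hz : z = y⁻¹ := eq_inv_of_mul_eq_one_right hyz
        exact ⟨y, by rw [← hz]; exact hr⟩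
      choose y hy using hex
      set s : ℕ → ℝ := fun n => f (y n) + g ((y n)⁻¹) with hs_def
      have hs_nonneg : ∀ n, 0 ≤ s n := by
        intro n
        have := hkey (y n) ((y n)⁻¹)
        simpa using this
      have hdist : ∀ n m, dist (y n) (y m) ≤ (s n + s m) / 2 := by
        intro n m
        have h1 : dist (1 : X) (y n * (y m)⁻¹) ≤ f (y n) + g ((y m)⁻¹) := hkey _ _
        have h2 : dist (1 : X) (y m * (y n)⁻¹) ≤ f (y m) + g ((y n)⁻¹) := hkey _ _
        have e1 : dist (1 : X) (y n * (y m)⁻¹) = dist (y m) (y n) := by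
          rw [← hright (y m) 1 (y n * (y m)⁻¹), one_mul, inv_mul_cancel_right]
        have e2 : dist (1 : X) (y m * (y n)⁻¹) = dist (y n) (y m) := by
          rw [← hright (y n) 1 (y m * (y n)⁻¹), one_mul, inv_mul_cancel_right]
        rw [e1] at h1; rw [e2] at h2
        rw [dist_comm] at h1
        simp only [hs_def]
        linarith
      have hcauchy : CauchySeq y := by
        refine cauchySeq_of_le_tendsto_0 (fun N => 1 / (N + 1)) ?_
          tendsto_one_div_add_atTop_nhds_zero_nat
        intro n m N hn hm
        have b1 : s n ≤ 1 / (N + 1) := by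
          refine le_trans (hy n).le (one_div_le_one_div_of_le (by positivity) ?_)
          have : (N : ℝ) ≤ (n : ℝ) := Nat.cast_le.mpr hn
          linarith
        have b2 : s m ≤ 1 / (N + 1) := by
          refine le_trans (hy m).le (one_div_le_one_div_of_le (by positivity) ?_)
          have : (N : ℝ) ≤ (m : ℝ) := Nat.cast_le.mpr hm
          linarith
        have := hdist n m
        linarith
      obtain ⟨b, hb⟩ := cauchySeq_tendsto_of_complete hcauchy
      have hlipf : LipschitzWith 1 f := LipschitzWith.of_dist_le_mul fun a b' => by
        rw [NNReal.coe_one, one_mul, Real.dist_eq]; exact hf.1 a b'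
      have hlipg : LipschitzWith 1 g := LipschitzWith.of_dist_le_mul fun a b' => by
        rw [NNReal.coe_one, one_mul, Real.dist_eq]; exact hg.1 a b'
      have hinv : Filter.Tendsto (fun n => (y n)⁻¹) Filter.atTop (nhds b⁻¹) := by
        rw [tendsto_iff_dist_tendsto_zero]
        simp only [dist_inv_eq hleft hright]
        exact tendsto_iff_dist_tendsto_zero.mp hb
      have hT : Filter.Tendsto s Filter.atTop (nhds (f b + g b⁻¹)) :=
        ((hlipf.continuous.tendsto b).comp hb).add ((hlipg.continuous.tendsto b⁻¹).comp hinv)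
      have hT0 : Filter.Tendsto s Filter.atTop (nhds 0) :=
        squeeze_zero hs_nonneg (fun n => (hy n).le) tendsto_one_div_add_atTop_nhds_zero_nat
      have hfb : f b + g b⁻¹ = 0 := tendsto_nhds_unique hT hT0
      refine ⟨b, f b, fun x => le_antisymm ?_ ?_⟩
      · have h1 : f x - f b ≤ dist x b := le_trans (le_abs_self _) (hf.1 x b)
        rw [dist_comm] at h1
        linarith
      · have h1 : f x + g b⁻¹ ≥ dist (1 : X) (x * b⁻¹) := hkey x b⁻¹
        have h2 : dist (1 : X) (x * b⁻¹) = dist b x := by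
          rw [← hright b 1 (x * b⁻¹), one_mul, inv_mul_cancel_right]
        rw [h2] at h1
        linarith
    · rintro ⟨a, c, hfa⟩
      have hbg : BddBelow (Set.range fun x : X => dist a⁻¹ x - c) := by
        refine ⟨-c, ?_⟩
        rintro r ⟨x, rfl⟩
        have := dist_nonneg (x := a⁻¹) (y := x)
        simp only
        linarith
      have hglip : ∀ x y : X, |(dist a⁻¹ x - c) - (dist a⁻¹ y - c)| ≤ dist x y := by
        intro x y
        rw [sub_sub_sub_cancel_right, abs_sub_le_iff]
        constructor
        · have h1 := dist_triangle a⁻¹ y x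
          have h2 : dist y x = dist x y := dist_comm y x
          linarith
        · have h1 := dist_triangle a⁻¹ x y
          linarith
      refine ⟨fun x => dist a⁻¹ x - c, ⟨hglip, hbg⟩, ?_, ?_⟩
      · funext x
        apply le_antisymm
        · have h1 : infConv f (fun x => dist a⁻¹ x - c) x ≤ f a + (dist a⁻¹ (a⁻¹ * x) - c) :=
            infConv_le hf.2 hbg (mul_inv_cancel_left a x)
          have h2 : dist a⁻¹ (a⁻¹ * x) = dist (1 : X) x := by
            rw [← hleft a⁻¹ 1 x, mul_one]
          rw [hfa a, dist_self, h2] at h1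
          simpa using h1
        · refine le_infConv fun u z huz => ?_
          show dist (1 : X) x ≤ f u + (dist a⁻¹ z - c)
          have h1 : dist (1 : X) (u * z) ≤ dist (1 : X) (u * a⁻¹) + dist (u * a⁻¹) (u * z) :=
            dist_triangle _ _ _
          have h2 : dist (1 : X) (u * a⁻¹) = dist a u := by
            rw [← mul_inv_cancel a]; exact hright a⁻¹ a u
          have h3 : dist (u * a⁻¹) (u * z) = dist a⁻¹ z := hleft u a⁻¹ z
          rw [hfa u, ← huz]
          linarith
      · funext x
        apply le_antisymm
        · have h1 : infConv (fun x => dist a⁻¹ x - c) f x ≤ (dist a⁻¹ a⁻¹ - c) + f (a * x) :=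
            infConv_le hbg hf.2 (inv_mul_cancel_left a x)
          have h2 : dist a (a * x) = dist (1 : X) x := by
            rw [← hleft a 1 x, mul_one]
          rw [hfa (a * x), dist_self, h2] at h1
          simpa using h1
        · refine le_infConv fun u z huz => ?_
          show dist (1 : X) x ≤ (dist a⁻¹ u - c) + f z
          have h1 : dist (1 : X) (u * z) ≤ dist (1 : X) (u * a) + dist (u * a) (u * z) :=
            dist_triangle _ _ _
          have h2 : dist (1 : X) (u * a) = dist a⁻¹ u := by
            rw [← inv_mul_cancel a]; exact hright a a⁻¹ u
          have h3 : dist (u * a) (u * z) = dist a z := hleft u a z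
          rw [hfa z, ← huz]
          linarith
end

section
/- Let (X,·,d) be a group which is complete and metric invariant, and let f, g be 1-Lipschitz bounded-below real functions on X such that f has a strong minimum at x_f and g has a strong minimum at x_g. Then f ⊕ g has a strong minimum at x_f · x_g; that is, argmin(f ⊕ g) = argmin(f) · argmin(g). -/
/-- A real-valued function `h` has a strong minimum at `x₀`: `h x₀ = inf h` and for
every `ε > 0` there is `δ > 0` such that `h x ≤ h x₀ + δ` implies `d(x, x₀) ≤ ε`. -/
def StrongMin {X : Type*} [MetricSpace X] (h : X → ℝ) (x₀ : X) : Prop :=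
  (∀ x, h x₀ ≤ h x) ∧
    ∀ ε : ℝ, 0 < ε → ∃ δ : ℝ, 0 < δ ∧ ∀ x, h x ≤ h x₀ + δ → dist x x₀ ≤ ε

/-- on a complete metric invariant group, if `f` and `g` are 1-Lipschitz
bounded-below functions with strong minima at `x_f` and `x_g` respectively, then
`f ⊕ g` has a strong minimum at `x_f * x_g`, i.e.
`argmin (f ⊕ g) = argmin f · argmin g`. -/
theorem strongMin_infConv_mul {X : Type*} [Group X] [MetricSpace X] [CompleteSpace X]
    (hleft : ∀ x y z : X, dist (x * y) (x * z) = dist y z)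
    (hright : ∀ x y z : X, dist (y * x) (z * x) = dist y z)
    (f g : X → ℝ)
    (hf : ∀ x y : X, |f x - f y| ≤ dist x y) (hfb : BddBelow (Set.range f))
    (hg : ∀ x y : X, |g x - g y| ≤ dist x y) (hgb : BddBelow (Set.range g))
    (xf xg : X) (hxf : StrongMin f xf) (hxg : StrongMin g xg) :
    StrongMin (infConv f g) (xf * xg) := by
  obtain ⟨hfmin, hfs⟩ := hxf
  obtain ⟨hgmin, hgs⟩ := hxg
  have hlb : ∀ x : X, ∀ r ∈ {r : ℝ | ∃ y z : X, y * z = x ∧ r = f y + g z},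
      f xf + g xg ≤ r := by
    rintro x r ⟨y, z, hyz, rfl⟩
    exact add_le_add (hfmin y) (hgmin z)
  have hne : ∀ x : X, (f x + g 1) ∈ {r : ℝ | ∃ y z : X, y * z = x ∧ r = f y + g z} :=
    fun x => ⟨x, 1, mul_one x, rfl⟩
  have hval : infConv f g (xf * xg) = f xf + g xg := by
    apply le_antisymm
    · exact csInf_le ⟨_, hlb _⟩ ⟨xf, xg, rfl, rfl⟩
    · exact le_csInf ⟨_, hne _⟩ (hlb _)
  constructor
  · intro x
    rw [hval]
    exact le_csInf ⟨_, hne x⟩ (hlb x)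
  · intro ε hε
    obtain ⟨δf, hδf, hf'⟩ := hfs (ε / 2) (by linarith)
    obtain ⟨δg, hδg, hg'⟩ := hgs (ε / 2) (by linarith)
    refine ⟨min δf δg / 2, by positivity, ?_⟩
    intro x hx
    rw [hval] at hx
    have h2 : infConv f g x < f xf + g xg + min δf δg := by
      have : (0:ℝ) < min δf δg := lt_min hδf hδg
      linarith
    obtain ⟨r, hrmem, hr⟩ := exists_lt_of_csInf_lt ⟨_, hne x⟩ h2
    obtain ⟨y, z, hyz, rfl⟩ := hrmem
    have hfy : f y ≤ f xf + δf := by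
      have := hgmin z
      have := min_le_left δf δg
      linarith
    have hgz : g z ≤ g xg + δg := by
      have := hfmin y
      have := min_le_right δf δg
      linarith
    have d1 : dist y xf ≤ ε / 2 := hf' y hfy
    have d2 : dist z xg ≤ ε / 2 := hg' z hgz
    calc dist x (xf * xg) = dist (y * z) (xf * xg) := by rw [hyz]
      _ ≤ dist (y * z) (y * xg) + dist (y * xg) (xf * xg) := dist_triangle _ _ _
      _ = dist z xg + dist y xf := by rw [hleft, hright]
      _ ≤ ε := by linarith
end

section
/- Let (X,d) be a metric space, let f and (fₙ) be 1-Lipschitz bounded-below real functions on X such that f has a strong minimum at x_f and each fₙ has a strong minimum at xₙ. If ρ(fₙ, f) → 0, where ρ(f,g) = sup_{x∈X} |f(x) − g(x)| / (1 + |f(x) − g(x)|), then d(xₙ, x_f) → 0. In other words, the map argmin : (S(X), ρ) → (X,d) sending a function with a strong minimum to its unique minimizer is continuous. -/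
/-- The metric `ρ(f,g) = sup_x |f x − g x| / (1 + |f x − g x|)`. -/
noncomputable def rhoDist {X : Type*} (f g : X → ℝ) : ℝ :=
  ⨆ x : X, |f x - g x| / (1 + |f x - g x|)

/-- if `f` and the `fₙ` are 1-Lipschitz bounded-below functions with
strong minima at `x_f` and `xₙ` respectively, and `ρ(fₙ, f) → 0`, then
`d(xₙ, x_f) → 0`: the map `argmin : (S(X), ρ) → (X, d)` is continuous. -/
theorem argmin_continuous {X : Type*} [MetricSpace X]
    (f : X → ℝ) (fn : ℕ → X → ℝ)
    (hf : ∀ x y : X, |f x - f y| ≤ dist x y) (hfb : BddBelow (Set.range f))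
    (hfn : ∀ n, ∀ x y : X, |fn n x - fn n y| ≤ dist x y)
    (hfnb : ∀ n, BddBelow (Set.range (fn n)))
    (xf : X) (hxf : StrongMin f xf)
    (xn : ℕ → X) (hxn : ∀ n, StrongMin (fn n) (xn n))
    (hconv : Filter.Tendsto (fun n => rhoDist (fn n) f) Filter.atTop (nhds 0)) :
    Filter.Tendsto (fun n => dist (xn n) xf) Filter.atTop (nhds 0) := by
  have key : ∀ n x, |fn n x - f x| / (1 + |fn n x - f x|) ≤ rhoDist (fn n) f := by
    intro n x
    refine le_ciSup (f := fun x => |fn n x - f x| / (1 + |fn n x - f x|)) ?_ x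
    refine ⟨1, ?_⟩
    rintro _ ⟨y, rfl⟩
    have h0 : (0:ℝ) ≤ |fn n y - f y| := abs_nonneg _
    rw [div_le_one (by linarith)]
    linarith
  rw [Metric.tendsto_atTop] at hconv ⊢
  intro ε hε
  obtain ⟨δ, hδ, hδ'⟩ := hxf.2 (ε/2) (by linarith)
  set s := (δ/2)/(1 + δ/2) with hs_def
  have hs : 0 < s := div_pos (by linarith) (by linarith)
  obtain ⟨N, hN⟩ := hconv s hs
  refine ⟨N, fun n hn => ?_⟩
  have hρ : rhoDist (fn n) f < s := by
    have h := hN n hn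
    rw [Real.dist_eq, sub_zero] at h
    exact lt_of_le_of_lt (le_abs_self _) h
  have hpt : ∀ x, |fn n x - f x| ≤ δ/2 := by
    intro x
    have h := lt_of_le_of_lt (key n x) hρ
    have ht0 : (0:ℝ) ≤ |fn n x - f x| := abs_nonneg _
    rw [hs_def, div_lt_div_iff₀ (by linarith) (by linarith)] at h
    nlinarith
  have h1 : f (xn n) ≤ fn n (xn n) + δ/2 := by
    have := hpt (xn n); have := abs_le.1 this; linarith [this.1]
  have h2 : fn n (xn n) ≤ fn n xf := (hxn n).1 xf
  have h3 : fn n xf ≤ f xf + δ/2 := by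
    have := abs_le.1 (hpt xf); linarith [this.2]
  have hd : dist (xn n) xf ≤ ε/2 := hδ' (xn n) (by linarith)
  rw [Real.dist_eq, sub_zero, abs_of_nonneg dist_nonneg]
  linarith
end

section
/- Let (X,·,d) be a group which is complete and metric invariant, with identity element e. Then a Katetov map f ∈ 𝒦(X) is invertible in the monoid (𝒦(X), ⊕) (i.e. there exists g ∈ 𝒦(X) with f ⊕ g = g ⊕ f = δ_e) if and only if f = δ_a = d(a,·) for some a ∈ X. Hence the group of units of (𝒦(X), ⊕) is X̂ = { d(a,·) : a ∈ X }, which is isometrically isomorphic to X. -/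
/-- A Katetov map: `|f x − f y| ≤ d(x,y) ≤ f x + f y` for all `x, y`. -/
def IsKatetov {X : Type*} [MetricSpace X] (f : X → ℝ) : Prop :=
  ∀ x y : X, |f x - f y| ≤ dist x y ∧ dist x y ≤ f x + f y

/-- The sup-metric `d_∞(f,g) = sup_x |f x − g x|`. -/
noncomputable def dInf {X : Type*} (f g : X → ℝ) : ℝ :=
  ⨆ x : X, |f x - g x|

lemma katetov_nonneg {X : Type*} [MetricSpace X] {f : X → ℝ} (hf : IsKatetov f) (x : X) :
    0 ≤ f x := by
  have := (hf x x).2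
  simp at this
  linarith

lemma isKatetov_dist {X : Type*} [MetricSpace X] (a : X) :
    IsKatetov (fun x => dist a x) := by
  intro x y
  constructor
  · have := abs_dist_sub_le x y a
    simpa [dist_comm] using this
  · calc dist x y ≤ dist x a + dist a y := dist_triangle x a y
      _ = dist a x + dist a y := by rw [dist_comm x a]

lemma infConv_dist {X : Type*} [Group X] [MetricSpace X]
    (hleft : ∀ x y z : X, dist (x * y) (x * z) = dist y z)
    (hright : ∀ x y z : X, dist (y * x) (z * x) = dist y z) (a b : X) :
    infConv (fun x => dist a x) (fun x => dist b x) = fun x => dist (a * b) x := by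
  funext x
  have lb : ∀ r ∈ {r : ℝ | ∃ y z : X, y * z = x ∧ r = dist a y + dist b z},
      dist (a * b) x ≤ r := by
    rintro r ⟨y, z, hyz, rfl⟩
    calc dist (a * b) x = dist (a * b) (y * z) := by rw [hyz]
      _ ≤ dist (a * b) (y * b) + dist (y * b) (y * z) := dist_triangle _ _ _
      _ = dist a y + dist b z := by rw [hright b a y, hleft y b z]
  have mem : dist (a * b) x ∈ {r : ℝ | ∃ y z : X, y * z = x ∧ r = dist a y + dist b z} := by
    refine ⟨a, a⁻¹ * x, mul_inv_cancel_left a x, ?_⟩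
    have := hleft a b (a⁻¹ * x)
    rw [mul_inv_cancel_left a x] at this
    simp [← this]
  exact le_antisymm (csInf_le ⟨dist (a * b) x, lb⟩ mem) (le_csInf ⟨_, mem⟩ lb)

/-- on a complete metric invariant group, a Katetov map `f` is
invertible in the monoid `(𝒦(X), ⊕)` iff `f = δ_a = d(a,·)` for some `a ∈ X`; hence
the group of units of `(𝒦(X), ⊕)` is `X̂ = {d(a,·) : a ∈ X}`, which is isometrically
isomorphic to `X` via `a ↦ δ_a`. -/
theorem katetov_units {X : Type*} [Group X] [MetricSpace X] [CompleteSpace X]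
    (hleft : ∀ x y z : X, dist (x * y) (x * z) = dist y z)
    (hright : ∀ x y z : X, dist (y * x) (z * x) = dist y z) :
    (∀ f : X → ℝ, IsKatetov f →
       ((∃ g : X → ℝ, IsKatetov g ∧ infConv f g = (fun x => dist (1 : X) x) ∧
           infConv g f = (fun x => dist (1 : X) x)) ↔
        ∃ a : X, f = fun x => dist a x)) ∧
    (∀ a b : X, infConv (fun x => dist a x) (fun x => dist b x) = fun x => dist (a * b) x) ∧
    (∀ a b : X, dInf (fun x => dist a x) (fun x => dist b x) = dist a b) := by
  refine ⟨?_, infConv_dist hleft hright, ?_⟩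
  · intro f hf
    constructor
    · rintro ⟨g, hg, hfg, _⟩
      -- (f ⊕ g)(1) = 0, extract approximate zeros of f
      have h1 : infConv f g 1 = 0 := by
        have := congrFun hfg 1
        simpa using this
      have hne : ({r : ℝ | ∃ y z : X, y * z = (1:X) ∧ r = f y + g z}).Nonempty :=
        ⟨f 1 + g 1, 1, 1, mul_one 1, rfl⟩
      have key : ∀ n : ℕ, ∃ y : X, f y < 1 / (n + 1) := by
        intro n
        have hpos : (0:ℝ) < 1 / (n + 1) := by positivity
        have : sInf {r : ℝ | ∃ y z : X, y * z = (1:X) ∧ r = f y + g z} < 1 / (n + 1) := by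
          rw [show sInf {r : ℝ | ∃ y z : X, y * z = (1:X) ∧ r = f y + g z} =
            infConv f g 1 from rfl, h1]; exact hpos
        obtain ⟨r, ⟨y, z, hyz, rfl⟩, hr⟩ := exists_lt_of_csInf_lt hne this
        exact ⟨y, lt_of_le_of_lt (by have := katetov_nonneg hg z; linarith) hr⟩
      choose u hu using key
      have hcauchy : CauchySeq u := by
        apply cauchySeq_of_le_tendsto_0 (fun N : ℕ => 2 / (N + 1))
        · intro n m N hn hm
          have h1 : f (u n) ≤ 1 / (N + 1) := by
            refine le_trans (hu n).le ?_
            apply one_div_le_one_div_of_le (by positivity)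
            have : (N:ℝ) ≤ n := Nat.cast_le.mpr hn
            linarith
          have h2 : f (u m) ≤ 1 / (N + 1) := by
            refine le_trans (hu m).le ?_
            apply one_div_le_one_div_of_le (by positivity)
            have : (N:ℝ) ≤ m := Nat.cast_le.mpr hm
            linarith
          have := (hf (u n) (u m)).2
          have heq : (1:ℝ) / (N + 1) + 1 / (N + 1) = 2 / (N + 1) := by ring
          linarith
        · have h0 : Filter.Tendsto (fun n : ℕ => 1 / ((n:ℝ) + 1)) Filter.atTop (nhds 0) :=
            tendsto_one_div_add_atTop_nhds_zero_nat
          have := h0.const_mul 2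
          simpa [mul_one_div, div_eq_mul_inv] using this
      obtain ⟨a, ha⟩ := cauchySeq_tendsto_of_complete hcauchy
      -- f a = 0
      have hdist0 : Filter.Tendsto (fun n => dist a (u n)) Filter.atTop (nhds 0) := by
        have := (tendsto_iff_dist_tendsto_zero).mp ha
        simpa [dist_comm] using this
      have hfu0 : Filter.Tendsto (fun n => f (u n)) Filter.atTop (nhds 0) := by
        apply squeeze_zero (fun n => katetov_nonneg hf (u n)) (fun n => (hu n).le)
        exact tendsto_one_div_add_atTop_nhds_zero_nat
      have hfa : f a = 0 := by
        have hle : f a ≤ 0 := by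
          have hsum : Filter.Tendsto (fun n => f (u n) + dist a (u n))
              Filter.atTop (nhds 0) := by
            have := hfu0.add hdist0
            simpa using this
          refine ge_of_tendsto' hsum (fun n => ?_)
          have := (hf a (u n)).1
          have h := abs_le.mp this
          linarith [h.1, h.2, dist_comm a (u n) ▸ (le_refl (dist a (u n)))]
        linarith [katetov_nonneg hf a]
      refine ⟨a, funext fun x => ?_⟩
      have h1 := abs_le.mp (hf x a).1
      have h2 := (hf x a).2
      rw [hfa] at h1 h2
      have : dist x a = dist a x := dist_comm x a
      simp only [sub_zero] at h1
      rw [add_zero] at h2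
      linarith [h1.1, h1.2]
    · rintro ⟨a, rfl⟩
      refine ⟨fun x => dist a⁻¹ x, isKatetov_dist a⁻¹, ?_, ?_⟩
      · rw [infConv_dist hleft hright a a⁻¹, mul_inv_cancel]
      · rw [infConv_dist hleft hright a⁻¹ a, inv_mul_cancel]
  · intro a b
    have bound : ∀ x : X, |dist a x - dist b x| ≤ dist a b := fun x => abs_dist_sub_le a b x
    have bdd : BddAbove (Set.range fun x : X => |dist a x - dist b x|) :=
      ⟨dist a b, by rintro r ⟨x, rfl⟩; exact bound x⟩
    refine le_antisymm (ciSup_le bound) ?_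
    have := le_ciSup bdd b
    simpa [dInf, abs_of_nonneg dist_nonneg] using this
end

section
/- Let (X,d) and (Y,d') be two complete metric invariant groups with identity elements e and e'. A map Φ : 𝒦(X) → 𝒦(Y) is a monoid isometric isomorphism (a bijection satisfying Φ(f ⊕ g) = Φ(f) ⊕ Φ(g) for all f,g, Φ(δ_e) = δ_{e'}, and d_∞(Φ(f), Φ(g)) = d_∞(f,g) for all f,g) if and only if there exists a bijective group homomorphism T : X → Y which is isometric (d'(T(x), T(y)) = d(x,y) for all x,y) such that Φ(f) = f ∘ T⁻¹ for all f ∈ 𝒦(X). -/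
section Aux
variable {X : Type*} [MetricSpace X]

theorem kat_nonneg {f : X → ℝ} (hf : IsKatetov f) (x : X) : 0 ≤ f x := by
  have h := (hf x x).2
  rw [dist_self] at h; linarith

theorem kat_delta (x : X) : IsKatetov (fun w => dist x w) := by
  intro a b
  simp only
  refine ⟨?_, ?_⟩
  · rw [dist_comm x a, dist_comm x b]
    exact abs_dist_sub_le a b x
  · rw [dist_comm x a]
    exact dist_triangle a x b

theorem delta_inj {x y : X} (h : (fun w => dist x w) = fun w => dist y w) : x = y := by
  have h' := congrFun h y
  simp only [dist_self] at h'
  exact dist_eq_zero.mp h'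

theorem dInf_delta {f : X → ℝ} (hf : IsKatetov f) (x : X) :
    dInf f (fun w => dist x w) = f x := by
  have : Nonempty X := ⟨x⟩
  have hb : ∀ w, |f w - dist x w| ≤ f x := by
    intro w
    have h1 : f w - f x ≤ dist w x := (abs_le.mp (hf w x).1).2
    have h2 : dist x w ≤ f x + f w := (hf x w).2
    rw [abs_le]
    constructor
    · linarith
    · rw [dist_comm x w] at h2 ⊢
      linarith
  apply le_antisymm
  · exact ciSup_le hb
  · have := le_ciSup (f := fun w => |f w - dist x w|)
      ⟨f x, by rintro r ⟨w, rfl⟩; exact hb w⟩ x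
    simpa [dInf, abs_of_nonneg (kat_nonneg hf x)] using this

theorem exists_point [CompleteSpace X] {f : X → ℝ}
    (hf : IsKatetov f) (h : ∀ ε : ℝ, 0 < ε → ∃ y, f y < ε) :
    ∃ x : X, f = fun w => dist x w := by
  choose u hu using fun n : ℕ => h ((1/2 : ℝ)^n) (by positivity)
  have hcauchy : CauchySeq u := by
    rw [Metric.cauchySeq_iff]
    intro ε hε
    obtain ⟨N, hN⟩ := exists_pow_lt_of_lt_one (by linarith : (0:ℝ) < ε/2)
      (by norm_num : (1:ℝ)/2 < 1)
    refine ⟨N, fun m hm n hn => ?_⟩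
    have h1 : f (u m) < ε/2 :=
      lt_of_lt_of_le (hu m) (le_trans (pow_le_pow_of_le_one (by norm_num) (by norm_num) hm) hN.le)
    have h2 : f (u n) < ε/2 :=
      lt_of_lt_of_le (hu n) (le_trans (pow_le_pow_of_le_one (by norm_num) (by norm_num) hn) hN.le)
    have := (hf (u m) (u n)).2
    linarith
  obtain ⟨x, hx⟩ := cauchySeq_tendsto_of_complete hcauchy
  have hfx : f x = 0 := by
    refine le_antisymm ?_ (kat_nonneg hf x)
    by_contra hc
    push_neg at hc
    obtain ⟨N1, hN1⟩ := (Metric.tendsto_atTop.mp hx (f x / 2) (by linarith))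
    obtain ⟨N2, hN2⟩ := exists_pow_lt_of_lt_one (by linarith : (0:ℝ) < f x / 2)
      (by norm_num : (1:ℝ)/2 < 1)
    set n := max N1 N2
    have hd : dist (u n) x < f x / 2 := hN1 n (le_max_left _ _)
    have hfn : f (u n) < f x / 2 :=
      lt_of_lt_of_le (hu n)
        (le_trans (pow_le_pow_of_le_one (by norm_num) (by norm_num) (le_max_right _ _)) hN2.le)
    have h1 : f x - f (u n) ≤ dist x (u n) := (abs_le.mp (hf x (u n)).1).2
    rw [dist_comm] at h1
    linarith
  refine ⟨x, funext fun w => le_antisymm ?_ ?_⟩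
  · have := (abs_le.mp (hf w x).1).2
    rw [dist_comm w x] at this
    linarith
  · have := (hf x w).2
    linarith

end Aux

section Grp
variable {X : Type*} [Group X] [MetricSpace X]

theorem infConv_set_nonempty (f g : X → ℝ) (x : X) :
    {r : ℝ | ∃ y z : X, y * z = x ∧ r = f y + g z}.Nonempty :=
  ⟨f x + g 1, x, 1, mul_one x, rfl⟩

theorem infConv_set_bdd {f g : X → ℝ} (hf : IsKatetov f) (hg : IsKatetov g) (x : X) :
    BddBelow {r : ℝ | ∃ y z : X, y * z = x ∧ r = f y + g z} := by
  refine ⟨0, ?_⟩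
  rintro r ⟨y, z, -, rfl⟩
  have := kat_nonneg hf y
  have := kat_nonneg hg z
  linarith

theorem infConv_katetov
    (hleft : ∀ x y z : X, dist (x * y) (x * z) = dist y z)
    (hright : ∀ x y z : X, dist (y * x) (z * x) = dist y z)
    {f g : X → ℝ} (hf : IsKatetov f) (hg : IsKatetov g) :
    IsKatetov (infConv f g) := by
  have key : ∀ a b : X, infConv f g a ≤ infConv f g b + dist a b := by
    intro a b
    have : infConv f g a - dist a b ≤ infConv f g b := by
      apply le_csInf (infConv_set_nonempty f g b)
      rintro r ⟨y, z, hyz, rfl⟩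
      have hmem : f y + g (y⁻¹ * a) ∈
          {r : ℝ | ∃ y' z' : X, y' * z' = a ∧ r = f y' + g z'} :=
        ⟨y, y⁻¹ * a, by group, rfl⟩
      have h1 : infConv f g a ≤ f y + g (y⁻¹ * a) :=
        csInf_le (infConv_set_bdd hf hg a) hmem
      have hd : dist (y⁻¹ * a) z = dist a b := by
        have h := hleft y (y⁻¹ * a) z
        rw [mul_inv_cancel_left, hyz] at h
        exact h.symm
      have h2 : g (y⁻¹ * a) - g z ≤ dist a b := by
        have := (abs_le.mp (hg (y⁻¹ * a) z).1).2
        rw [hd] at this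
        exact this
      linarith
    linarith
  intro a b
  constructor
  · rw [abs_le]
    constructor
    · have := key b a; rw [dist_comm b a] at this; linarith
    · have := key a b; linarith
  · have : dist a b - infConv f g b ≤ infConv f g a := by
      apply le_csInf (infConv_set_nonempty f g a)
      rintro r ⟨y, z, hyz, rfl⟩
      have : dist a b - (f y + g z) ≤ infConv f g b := by
        apply le_csInf (infConv_set_nonempty f g b)
        rintro s ⟨y', z', hyz', rfl⟩
        have hd : dist a b ≤ dist y y' + dist z z' := by
          calc dist a b = dist (y * z) (y' * z') := by rw [hyz, hyz']
          _ ≤ dist (y * z) (y' * z) + dist (y' * z) (y' * z') := dist_triangle _ _ _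
          _ = dist y y' + dist z z' := by rw [hright z y y', hleft y' z z']
        have h1 := (hf y y').2
        have h2 := (hg z z').2
        linarith
      linarith
    linarith

theorem infConv_delta
    (hleft : ∀ x y z : X, dist (x * y) (x * z) = dist y z)
    (hright : ∀ x y z : X, dist (y * x) (z * x) = dist y z)
    (x y : X) :
    infConv (fun w => dist x w) (fun w => dist y w) = fun w => dist (x * y) w := by
  funext w
  apply le_antisymm
  · have hmem : dist x x + dist y (x⁻¹ * w) ∈
        {r : ℝ | ∃ u v : X, u * v = w ∧ r = dist x u + dist y v} :=
      ⟨x, x⁻¹ * w, by group, rfl⟩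
    have heq : dist x x + dist y (x⁻¹ * w) = dist (x * y) w := by
      rw [dist_self, zero_add]
      calc dist y (x⁻¹ * w) = dist (x * y) (x * (x⁻¹ * w)) := (hleft x y (x⁻¹ * w)).symm
      _ = dist (x * y) w := by rw [mul_inv_cancel_left]
    calc infConv (fun w => dist x w) (fun w => dist y w) w
        ≤ dist x x + dist y (x⁻¹ * w) :=
          csInf_le (infConv_set_bdd (kat_delta x) (kat_delta y) w) hmem
      _ = dist (x * y) w := heq
  · apply le_csInf (infConv_set_nonempty _ _ w)
    rintro r ⟨u, v, huv, rfl⟩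
    calc dist (x * y) w = dist (x * y) (u * v) := by rw [huv]
    _ ≤ dist (x * y) (u * y) + dist (u * y) (u * v) := dist_triangle _ _ _
    _ = dist x u + dist y v := by rw [hright y x u, hleft u y v]

theorem small_values {f g : X → ℝ}
    (hf : IsKatetov f) (hg : IsKatetov g)
    (h : infConv f g 1 = 0) : ∀ ε : ℝ, 0 < ε → ∃ y, f y < ε := by
  intro ε hε
  have hlt : sInf {r : ℝ | ∃ y z : X, y * z = 1 ∧ r = f y + g z} < ε := by
    have : infConv f g 1 < ε := by rw [h]; exact hε
    exact this
  obtain ⟨r, ⟨y, z, hyz, rfl⟩, hr⟩ :=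
    (csInf_lt_iff (infConv_set_bdd hf hg 1) (infConv_set_nonempty f g 1)).mp hlt
  exact ⟨y, by linarith [kat_nonneg hg z]⟩

end Grp

/-- for complete metric invariant groups `X`, `Y`, a map
`Φ : 𝒦(X) → 𝒦(Y)` is a monoid isometric isomorphism (a bijection of `𝒦(X)` onto
`𝒦(Y)` preserving `⊕`, the identity element and `d_∞`) iff there is an isometric
bijective group homomorphism `T : X → Y` with `Φ(f) = f ∘ T⁻¹` for all `f ∈ 𝒦(X)`. -/
theorem katetov_banach_stone {X Y : Type*}
    [Group X] [MetricSpace X] [CompleteSpace X]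
    [Group Y] [MetricSpace Y] [CompleteSpace Y]
    (hleftX : ∀ x y z : X, dist (x * y) (x * z) = dist y z)
    (hrightX : ∀ x y z : X, dist (y * x) (z * x) = dist y z)
    (hleftY : ∀ x y z : Y, dist (x * y) (x * z) = dist y z)
    (hrightY : ∀ x y z : Y, dist (y * x) (z * x) = dist y z)
    (Φ : (X → ℝ) → (Y → ℝ)) :
    ((∀ f : X → ℝ, IsKatetov f → IsKatetov (Φ f)) ∧
     (∀ f g : X → ℝ, IsKatetov f → IsKatetov g → Φ f = Φ g → f = g) ∧
     (∀ g : Y → ℝ, IsKatetov g → ∃ f : X → ℝ, IsKatetov f ∧ Φ f = g) ∧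
     (∀ f g : X → ℝ, IsKatetov f → IsKatetov g → Φ (infConv f g) = infConv (Φ f) (Φ g)) ∧
     Φ (fun x => dist (1 : X) x) = (fun y => dist (1 : Y) y) ∧
     (∀ f g : X → ℝ, IsKatetov f → IsKatetov g → dInf (Φ f) (Φ g) = dInf f g)) ↔
    (∃ T : X ≃* Y, (∀ x y : X, dist (T x) (T y) = dist x y) ∧
       ∀ f : X → ℝ, IsKatetov f → Φ f = f ∘ T.symm) := by
  constructor
  · rintro ⟨hK, hInj, hSurj, hMul, hId, hIso⟩
    -- Step A: Φ maps point maps to point maps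
    have stepA : ∀ x : X, ∃ y : Y, Φ (fun w => dist x w) = fun w => dist y w := by
      intro x
      have hf := hK _ (kat_delta x)
      have hg := hK _ (kat_delta x⁻¹)
      have hconv : infConv (Φ (fun w => dist x w)) (Φ (fun w => dist x⁻¹ w))
          = fun w => dist (1 : Y) w := by
        rw [← hMul _ _ (kat_delta x) (kat_delta x⁻¹),
          infConv_delta hleftX hrightX x x⁻¹, mul_inv_cancel]
        exact hId
      have h1 : infConv (Φ (fun w => dist x w)) (Φ (fun w => dist x⁻¹ w)) 1 = 0 := by
        rw [hconv]; simp
      exact exists_point hf (small_values hf hg h1)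
    choose T0 hT0 using stepA
    -- T0 is a homomorphism
    have hhom : ∀ x y : X, T0 (x * y) = T0 x * T0 y := by
      intro x y
      apply delta_inj (X := Y)
      rw [← hT0 (x * y), ← infConv_delta hleftY hrightY (T0 x) (T0 y),
        ← hT0 x, ← hT0 y, ← hMul _ _ (kat_delta x) (kat_delta y),
        infConv_delta hleftX hrightX x y]
    have hinj : Function.Injective T0 := by
      intro x y h
      apply delta_inj (X := X)
      apply hInj _ _ (kat_delta x) (kat_delta y)
      rw [hT0 x, hT0 y, h]
    have hsurj : Function.Surjective T0 := by
      intro y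
      obtain ⟨f, hfK, hf⟩ := hSurj _ (kat_delta y)
      obtain ⟨g, hgK, hg⟩ := hSurj _ (kat_delta y⁻¹)
      have hconv : Φ (infConv f g) = fun w => dist (1 : Y) w := by
        rw [hMul f g hfK hgK, hf, hg, infConv_delta hleftY hrightY y y⁻¹, mul_inv_cancel]
      have hfg : infConv f g = fun w => dist (1 : X) w := by
        apply hInj _ _ (infConv_katetov hleftX hrightX hfK hgK) (kat_delta 1)
        rw [hconv, hId]
      have h1 : infConv f g 1 = 0 := by rw [hfg]; simp
      obtain ⟨x, hx⟩ := exists_point hfK (small_values hfK hgK h1)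
      refine ⟨x, delta_inj (X := Y) ?_⟩
      rw [← hT0 x, ← hx, hf]
    refine ⟨MulEquiv.mk' (Equiv.ofBijective T0 ⟨hinj, hsurj⟩) hhom, ?_, ?_⟩
    · intro x y
      show dist (T0 x) (T0 y) = dist x y
      have h1 : dInf (Φ (fun w => dist x w)) (fun w => dist (T0 y) w) = dist (T0 x) (T0 y) := by
        rw [hT0 x]
        exact dInf_delta (kat_delta (T0 x)) (T0 y)
      have h2 : dInf (Φ (fun w => dist x w)) (Φ (fun w => dist y w)) = dist x y := by
        rw [hIso _ _ (kat_delta x) (kat_delta y)]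
        exact dInf_delta (kat_delta x) y
      rw [hT0 y] at h2
      rw [← h1, h2]
    · intro f hf
      funext y
      set T := MulEquiv.mk' (Equiv.ofBijective T0 ⟨hinj, hsurj⟩) hhom with hT
      have hxy : T0 (T.symm y) = y := T.apply_symm_apply y
      have h1 : dInf (Φ f) (fun w => dist (T0 (T.symm y)) w) = Φ f (T0 (T.symm y)) :=
        dInf_delta (hK f hf) (T0 (T.symm y))
      have h2 : dInf (Φ f) (Φ (fun w => dist (T.symm y) w)) = f (T.symm y) := by
        rw [hIso _ _ hf (kat_delta (T.symm y))]
        exact dInf_delta hf (T.symm y)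
      rw [hT0 (T.symm y)] at h2
      rw [h2] at h1
      rw [hxy] at h1
      exact h1.symm
  · rintro ⟨T, hTiso, hTcomp⟩
    have hTsi : ∀ a b : Y, dist (T.symm a) (T.symm b) = dist a b := by
      intro a b
      rw [← hTiso (T.symm a) (T.symm b), T.apply_symm_apply, T.apply_symm_apply]
    have hkat : ∀ {f : X → ℝ}, IsKatetov f → IsKatetov (f ∘ T.symm) := by
      intro f hf a b
      have := hf (T.symm a) (T.symm b)
      rw [hTsi a b] at this
      exact this
    refine ⟨?_, ?_, ?_, ?_, ?_, ?_⟩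
    · intro f hf
      rw [hTcomp f hf]
      exact hkat hf
    · intro f g hf hg h
      rw [hTcomp f hf, hTcomp g hg] at h
      funext x
      have := congrFun h (T x)
      simpa using this
    · intro g hg
      have hgT : IsKatetov (g ∘ ⇑T) := by
        intro a b
        have := hg (T a) (T b)
        rw [hTiso a b] at this
        exact this
      refine ⟨g ∘ ⇑T, hgT, ?_⟩
      rw [hTcomp _ hgT]
      funext y
      simp
    · intro f g hf hg
      rw [hTcomp _ (infConv_katetov hleftX hrightX hf hg), hTcomp f hf, hTcomp g hg]
      funext w
      show infConv f g (T.symm w) = infConv (f ∘ ⇑T.symm) (g ∘ ⇑T.symm) w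
      have hset : {r : ℝ | ∃ y z : X, y * z = T.symm w ∧ r = f y + g z}
          = {r : ℝ | ∃ y z : Y, y * z = w ∧ r = (f ∘ ⇑T.symm) y + (g ∘ ⇑T.symm) z} := by
        ext r
        constructor
        · rintro ⟨y, z, hyz, rfl⟩
          refine ⟨T y, T z, ?_, by simp⟩
          rw [← map_mul, hyz, T.apply_symm_apply]
        · rintro ⟨y, z, hyz, rfl⟩
          exact ⟨T.symm y, T.symm z, by rw [← map_mul, hyz], rfl⟩
      rw [infConv, infConv, hset]
    · rw [hTcomp _ (kat_delta 1)]
      funext y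
      show dist (1 : X) (T.symm y) = dist (1 : Y) y
      calc dist (1 : X) (T.symm y) = dist (T.symm 1) (T.symm y) := by rw [map_one]
      _ = dist (1 : Y) y := hTsi 1 y
    · intro f g hf hg
      rw [hTcomp f hf, hTcomp g hg]
      unfold dInf
      exact T.symm.surjective.iSup_comp fun x => |f x - g x|
end

section
/- Let X be a Banach space, let 𝒦_C(X) be the set of convex Katetov maps on X, let λ ∈ (0,1), and let g ∈ 𝒦_C(X). Then there exists a unique f₀ ∈ 𝒦_C(X) such that (λ ⋆ f₀) ⊕ g = f₀, i.e. such that for every x ∈ X, inf { λ f₀(y/λ) + g(z) : y,z ∈ X, y + z = x } = f₀(x). -/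
namespace KatetovFix

variable {X : Type*} [NormedAddCommGroup X] [NormedSpace ℝ X]

lemma k_nonneg {f : X → ℝ} (hf : IsKatetov f) (x : X) : 0 ≤ f x := by
  have h := (hf x x).2; rw [dist_self] at h; linarith

lemma k_lower {f : X → ℝ} (hf : IsKatetov f) (x : X) : ‖x‖ - f 0 ≤ f x := by
  have h := (hf x 0).2; rw [dist_zero_right] at h; linarith

lemma k_upper {f : X → ℝ} (hf : IsKatetov f) (x : X) : f x ≤ f 0 + ‖x‖ := by
  have h := abs_le.mp (hf x 0).1; rw [dist_zero_right] at h; linarith [h.2]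

lemma diff_bound {f f' : X → ℝ} (hf : IsKatetov f) (hf' : IsKatetov f') (x : X) :
    |f x - f' x| ≤ f 0 + f' 0 := by
  have h1 := k_upper hf x
  have h2 := k_lower hf' x
  have h3 := k_upper hf' x
  have h4 := k_lower hf x
  rw [abs_sub_le_iff]; constructor <;> linarith

/-- The set appearing in the inf-convolution. -/
def Sset (lam : ℝ) (g f : X → ℝ) (x : X) : Set ℝ :=
  {r : ℝ | ∃ y z : X, y + z = x ∧ r = lam * f (lam⁻¹ • y) + g z}

/-- The inf-convolution operator. -/
noncomputable def T (lam : ℝ) (g f : X → ℝ) (x : X) : ℝ := sInf (Sset lam g f x)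

lemma norm_inv_smul {lam : ℝ} (hlam : 0 < lam) (y : X) :
    ‖lam⁻¹ • y‖ = lam⁻¹ * ‖y‖ := by
  rw [norm_smul, Real.norm_eq_abs, abs_inv, abs_of_pos hlam]

lemma Sset_nonempty (lam : ℝ) (g f : X → ℝ) (x : X) : (Sset lam g f x).Nonempty :=
  ⟨lam * f (lam⁻¹ • 0) + g x, 0, x, zero_add x, rfl⟩

lemma Sset_lb {lam : ℝ} (hlam : 0 < lam) {g f : X → ℝ} (hf : IsKatetov f)
    (hg : IsKatetov g) (x : X) :
    ∀ r ∈ Sset lam g f x, ‖x‖ - lam * f 0 - g 0 ≤ r := by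
  rintro r ⟨y, z, hyz, rfl⟩
  have h1 : lam⁻¹ * ‖y‖ - f 0 ≤ f (lam⁻¹ • y) := by
    have := k_lower hf (lam⁻¹ • y); rwa [norm_inv_smul hlam] at this
  have h2 := k_lower hg z
  have h3 : ‖x‖ ≤ ‖y‖ + ‖z‖ := hyz ▸ norm_add_le y z
  have h4 : lam * (lam⁻¹ * ‖y‖ - f 0) ≤ lam * f (lam⁻¹ • y) :=
    mul_le_mul_of_nonneg_left h1 hlam.le
  have h5 : lam * (lam⁻¹ * ‖y‖ - f 0) = ‖y‖ - lam * f 0 := by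
    field_simp
  linarith [h5 ▸ h4]

lemma Sset_bdd {lam : ℝ} (hlam : 0 < lam) {g f : X → ℝ} (hf : IsKatetov f)
    (hg : IsKatetov g) (x : X) : BddBelow (Sset lam g f x) :=
  ⟨_, Sset_lb hlam hf hg x⟩

lemma T_katetov {lam : ℝ} (hlam : 0 < lam) {g : X → ℝ} (hg : IsKatetov g)
    {f : X → ℝ} (hf : IsKatetov f) : IsKatetov (T lam g f) := by
  have bdd : ∀ u, BddBelow (Sset lam g f u) := fun u => Sset_bdd hlam hf hg u
  have hne : ∀ u, (Sset lam g f u).Nonempty := fun u => Sset_nonempty lam g f u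
  have lip : ∀ x x' : X, T lam g f x ≤ T lam g f x' + ‖x - x'‖ := by
    intro x x'
    have key : T lam g f x - ‖x - x'‖ ≤ T lam g f x' := by
      apply le_csInf (hne x')
      rintro r' ⟨y, z, hyz, rfl⟩
      have hmem : lam * f (lam⁻¹ • y) + g (z + (x - x')) ∈ Sset lam g f x :=
        ⟨y, z + (x - x'), by rw [← hyz]; abel, rfl⟩
      have h1 : T lam g f x ≤ lam * f (lam⁻¹ • y) + g (z + (x - x')) :=
        csInf_le (bdd x) hmem
      have h2 : |g (z + (x - x')) - g z| ≤ dist (z + (x - x')) z := (hg _ _).1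
      rw [dist_eq_norm, show z + (x - x') - z = x - x' by abel] at h2
      have h3 := (abs_le.mp h2).2
      linarith
    linarith
  have sum : ∀ x x' : X, ‖x - x'‖ ≤ T lam g f x + T lam g f x' := by
    intro x x'
    have key : ‖x - x'‖ - T lam g f x' ≤ T lam g f x := by
      apply le_csInf (hne x)
      rintro r ⟨y, z, hyz, rfl⟩
      have key2 : ‖x - x'‖ - (lam * f (lam⁻¹ • y) + g z) ≤ T lam g f x' := by
        apply le_csInf (hne x')
        rintro r' ⟨y', z', hyz', rfl⟩
        have hfk : dist (lam⁻¹ • y) (lam⁻¹ • y') ≤ f (lam⁻¹ • y) + f (lam⁻¹ • y') :=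
          (hf _ _).2
        have hgk : dist z z' ≤ g z + g z' := (hg _ _).2
        have hd : dist (lam⁻¹ • y) (lam⁻¹ • y') = lam⁻¹ * ‖y - y'‖ := by
          rw [dist_eq_norm, ← smul_sub, norm_inv_smul hlam]
        rw [hd] at hfk
        have h4 : ‖y - y'‖ ≤ lam * (f (lam⁻¹ • y) + f (lam⁻¹ • y')) := by
          have hm := mul_le_mul_of_nonneg_left hfk hlam.le
          have h5 : lam * (lam⁻¹ * ‖y - y'‖) = ‖y - y'‖ := by field_simp
          linarith
        have h6 : ‖x - x'‖ ≤ ‖y - y'‖ + ‖z - z'‖ := by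
          have he : x - x' = (y - y') + (z - z') := by rw [← hyz, ← hyz']; abel
          rw [he]; exact norm_add_le _ _
        rw [dist_eq_norm] at hgk
        have h7 : lam * (f (lam⁻¹ • y) + f (lam⁻¹ • y'))
            = lam * f (lam⁻¹ • y) + lam * f (lam⁻¹ • y') := by ring
        linarith
      linarith
    linarith
  intro x x'
  constructor
  · rw [abs_sub_le_iff, dist_eq_norm]
    refine ⟨by linarith [lip x x'], ?_⟩
    have := lip x' x
    rw [norm_sub_rev] at this
    linarith
  · rw [dist_eq_norm]; exact sum x x'

lemma T_convex {lam : ℝ} (hlam : 0 < lam) {g : X → ℝ} (hg : IsKatetov g)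
    {f : X → ℝ} (hf : IsKatetov f)
    (hfc : ConvexOn ℝ Set.univ f) (hgc : ConvexOn ℝ Set.univ g) :
    ConvexOn ℝ Set.univ (T lam g f) := by
  refine ⟨convex_univ, ?_⟩
  intro x _ x' _ a b ha hb hab
  have bdd : ∀ u, BddBelow (Sset lam g f u) := fun u => Sset_bdd hlam hf hg u
  have hne : ∀ u, (Sset lam g f u).Nonempty := fun u => Sset_nonempty lam g f u
  simp only [smul_eq_mul]
  apply le_of_forall_pos_le_add
  intro ε hε
  obtain ⟨r, hr, hrlt⟩ := Real.lt_sInf_add_pos (hne x) hε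
  obtain ⟨r', hr', hrlt'⟩ := Real.lt_sInf_add_pos (hne x') hε
  rw [show sInf (Sset lam g f x) = T lam g f x from rfl] at hrlt
  rw [show sInf (Sset lam g f x') = T lam g f x' from rfl] at hrlt'
  obtain ⟨y, z, hyz, rfl⟩ := hr
  obtain ⟨y', z', hyz', rfl⟩ := hr'
  have hmem : lam * f (lam⁻¹ • (a • y + b • y')) + g (a • z + b • z')
      ∈ Sset lam g f (a • x + b • x') := by
    refine ⟨a • y + b • y', a • z + b • z', ?_, rfl⟩
    rw [← hyz, ← hyz']; module
  have h1 : T lam g f (a • x + b • x')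
      ≤ lam * f (lam⁻¹ • (a • y + b • y')) + g (a • z + b • z') :=
    csInf_le (bdd _) hmem
  have hsm : lam⁻¹ • (a • y + b • y') = a • (lam⁻¹ • y) + b • (lam⁻¹ • y') := by
    module
  have h2 : f (lam⁻¹ • (a • y + b • y'))
      ≤ a * f (lam⁻¹ • y) + b * f (lam⁻¹ • y') := by
    rw [hsm]
    simpa [smul_eq_mul] using
      hfc.2 (Set.mem_univ (lam⁻¹ • y)) (Set.mem_univ (lam⁻¹ • y')) ha hb hab
  have h3 : g (a • z + b • z') ≤ a * g z + b * g z' := by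
    simpa [smul_eq_mul] using
      hgc.2 (Set.mem_univ z) (Set.mem_univ z') ha hb hab
  have h4 : lam * f (lam⁻¹ • (a • y + b • y'))
      ≤ lam * (a * f (lam⁻¹ • y) + b * f (lam⁻¹ • y')) :=
    mul_le_mul_of_nonneg_left h2 hlam.le
  have h5 : a * (lam * f (lam⁻¹ • y) + g z) + b * (lam * f (lam⁻¹ • y') + g z')
      ≤ a * (T lam g f x + ε) + b * (T lam g f x' + ε) := by
    have := mul_le_mul_of_nonneg_left hrlt.le ha
    have := mul_le_mul_of_nonneg_left hrlt'.le hb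
    linarith
  nlinarith [h1, h3, h4, h5, hab]

lemma T_contract_one {lam : ℝ} (hlam : 0 < lam) {g : X → ℝ} (hg : IsKatetov g)
    {f f' : X → ℝ} (hf : IsKatetov f) (hf' : IsKatetov f') {C : ℝ}
    (hC : ∀ u, |f u - f' u| ≤ C) (x : X) :
    T lam g f x ≤ T lam g f' x + lam * C := by
  have key : T lam g f x - lam * C ≤ T lam g f' x := by
    apply le_csInf (Sset_nonempty lam g f' x)
    rintro r' ⟨y, z, hyz, rfl⟩
    have hmem : lam * f (lam⁻¹ • y) + g z ∈ Sset lam g f x := ⟨y, z, hyz, rfl⟩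
    have h1 : T lam g f x ≤ lam * f (lam⁻¹ • y) + g z :=
      csInf_le (Sset_bdd hlam hf hg x) hmem
    have h2 := (abs_le.mp (hC (lam⁻¹ • y))).2
    have h3 : lam * (f (lam⁻¹ • y) - f' (lam⁻¹ • y)) ≤ lam * C :=
      mul_le_mul_of_nonneg_left h2 hlam.le
    have h4 : lam * (f (lam⁻¹ • y) - f' (lam⁻¹ • y))
        = lam * f (lam⁻¹ • y) - lam * f' (lam⁻¹ • y) := by ring
    linarith
  linarith

lemma T_contract {lam : ℝ} (hlam : 0 < lam) {g : X → ℝ} (hg : IsKatetov g)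
    {f f' : X → ℝ} (hf : IsKatetov f) (hf' : IsKatetov f') {C : ℝ}
    (hC : ∀ u, |f u - f' u| ≤ C) (x : X) :
    |T lam g f x - T lam g f' x| ≤ lam * C := by
  have h1 := T_contract_one hlam hg hf hf' hC x
  have h2 := T_contract_one hlam hg hf' hf
    (fun u => by rw [abs_sub_comm]; exact hC u) x
  rw [abs_sub_le_iff]; exact ⟨by linarith, by linarith⟩

end KatetovFix

open KatetovFix Filter Topology in
/-- for a Banach space `X`, `λ ∈ (0,1)` and a convex Katetov map `g`,
there is a unique convex Katetov map `f₀` with `(λ ⋆ f₀) ⊕ g = f₀`, where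
`(λ ⋆ f)(x) = λ f(x/λ)` and `⊕` is the inf-convolution with respect to addition. -/
theorem katetov_convex_fixed_point {X : Type*}
    [NormedAddCommGroup X] [NormedSpace ℝ X] [CompleteSpace X]
    (lam : ℝ) (hlam : lam ∈ Set.Ioo (0 : ℝ) 1)
    (g : X → ℝ) (hgK : IsKatetov g) (hgC : ConvexOn ℝ Set.univ g) :
    ∃! f₀ : X → ℝ, (IsKatetov f₀ ∧ ConvexOn ℝ Set.univ f₀) ∧
      ∀ x : X, sInf {r : ℝ | ∃ y z : X, y + z = x ∧ r = lam * f₀ (lam⁻¹ • y) + g z}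
        = f₀ x := by
  obtain ⟨hl0, hl1⟩ := hlam
  -- the iteration sequence
  let F : ℕ → X → ℝ := fun n => Nat.rec g (fun _ f => T lam g f) n
  have hFs : ∀ n, F (n + 1) = T lam g (F n) := fun n => rfl
  have hFK : ∀ n, IsKatetov (F n) ∧ ConvexOn ℝ Set.univ (F n) := by
    intro n
    induction n with
    | zero => exact ⟨hgK, hgC⟩
    | succ n ih => exact ⟨T_katetov hl0 hgK ih.1, T_convex hl0 hgK ih.1 ih.2 hgC⟩
  set C₀ : ℝ := F 1 0 + g 0 with hC₀
  have hstep : ∀ n, ∀ x, |F (n + 1) x - F n x| ≤ lam ^ n * C₀ := by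
    intro n
    induction n with
    | zero =>
      intro x
      rw [pow_zero, one_mul]; exact diff_bound (hFK 1).1 hgK x
    | succ n ih =>
      intro x
      have h := T_contract hl0 hgK (hFK (n + 1)).1 (hFK n).1 ih x
      calc |F (n + 2) x - F (n + 1) x| ≤ lam * (lam ^ n * C₀) := h
        _ = lam ^ (n + 1) * C₀ := by ring
  have hgeo : ∀ x, ∀ n, dist (F n x) (F (n + 1) x) ≤ C₀ * lam ^ n := by
    intro x n
    rw [Real.dist_eq]
    calc |F n x - F (n + 1) x| = |F (n + 1) x - F n x| := abs_sub_comm _ _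
      _ ≤ lam ^ n * C₀ := hstep n x
      _ = C₀ * lam ^ n := by ring
  have hcauchy : ∀ x, CauchySeq (fun n => F n x) := fun x =>
    cauchySeq_of_le_geometric lam C₀ hl1 (hgeo x)
  choose f₀ hf₀ using fun x => cauchySeq_tendsto_of_complete (hcauchy x)
  have hK0 : IsKatetov f₀ := by
    intro x y
    constructor
    · have h1 : Tendsto (fun n => |F n x - F n y|) atTop (𝓝 |f₀ x - f₀ y|) :=
        ((hf₀ x).sub (hf₀ y)).abs
      exact le_of_tendsto h1 (Eventually.of_forall fun n => ((hFK n).1 x y).1)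
    · have h1 : Tendsto (fun n => F n x + F n y) atTop (𝓝 (f₀ x + f₀ y)) :=
        (hf₀ x).add (hf₀ y)
      exact ge_of_tendsto h1 (Eventually.of_forall fun n => ((hFK n).1 x y).2)
  have hCv0 : ConvexOn ℝ Set.univ f₀ := by
    refine ⟨convex_univ, fun x _ y _ a b ha hb hab => ?_⟩
    have h1 : Tendsto (fun n => a * F n x + b * F n y) atTop
        (𝓝 (a * f₀ x + b * f₀ y)) := ((hf₀ x).const_mul a).add ((hf₀ y).const_mul b)
    have h2 : ∀ n, F n (a • x + b • y) ≤ a * F n x + b * F n y := fun n => by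
      simpa [smul_eq_mul] using
        (hFK n).2.2 (Set.mem_univ x) (Set.mem_univ y) ha hb hab
    simpa [smul_eq_mul] using
      le_of_tendsto_of_tendsto' (hf₀ (a • x + b • y)) h1 h2
  have hunif : ∀ n x, |F n x - f₀ x| ≤ C₀ * lam ^ n / (1 - lam) := by
    intro n x
    have := dist_le_of_le_geometric_of_tendsto lam C₀ hl1 (hgeo x) (hf₀ x) n
    rwa [Real.dist_eq] at this
  have hfix : ∀ x, T lam g f₀ x = f₀ x := by
    intro x
    have hb : ∀ n : ℕ, |T lam g f₀ x - f₀ x| ≤ (2 * lam * C₀ / (1 - lam)) * lam ^ n := by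
      intro n
      have h1 : |T lam g f₀ x - T lam g (F n) x| ≤ lam * (C₀ * lam ^ n / (1 - lam)) :=
        T_contract hl0 hgK hK0 (hFK n).1
          (fun u => by rw [abs_sub_comm]; exact hunif n u) x
      have h2 := hunif (n + 1) x
      have h3 : T lam g (F n) x = F (n + 1) x := rfl
      have h4 : |T lam g f₀ x - f₀ x|
          ≤ |T lam g f₀ x - T lam g (F n) x| + |F (n + 1) x - f₀ x| := by
        rw [h3] at *
        calc |T lam g f₀ x - f₀ x|
            = |(T lam g f₀ x - F (n + 1) x) + (F (n + 1) x - f₀ x)| := by ring_nf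
          _ ≤ |T lam g f₀ x - F (n + 1) x| + |F (n + 1) x - f₀ x| := abs_add_le _ _
      have h5 : lam * (C₀ * lam ^ n / (1 - lam)) + C₀ * lam ^ (n + 1) / (1 - lam)
          = (2 * lam * C₀ / (1 - lam)) * lam ^ n := by
        field_simp
        ring
      linarith
    have htend : Tendsto (fun n : ℕ => (2 * lam * C₀ / (1 - lam)) * lam ^ n)
        atTop (𝓝 0) := by
      simpa using
        (tendsto_pow_atTop_nhds_zero_of_lt_one hl0.le hl1).const_mul
          (2 * lam * C₀ / (1 - lam))
    have h0 : |T lam g f₀ x - f₀ x| ≤ 0 :=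
      ge_of_tendsto htend (Eventually.of_forall hb)
    have := abs_nonneg (T lam g f₀ x - f₀ x)
    have : |T lam g f₀ x - f₀ x| = 0 := le_antisymm h0 this
    have := abs_eq_zero.mp this
    linarith
  refine ⟨f₀, ⟨⟨hK0, hCv0⟩, hfix⟩, ?_⟩
  rintro f ⟨⟨hfK, hfC⟩, hffix⟩
  have hfx : ∀ u, T lam g f u = f u := hffix
  have key : ∀ n : ℕ, ∀ u, |f u - f₀ u| ≤ lam ^ n * (f 0 + f₀ 0) := by
    intro n
    induction n with
    | zero => simpa using fun u => diff_bound hfK hK0 u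
    | succ n ih =>
      intro u
      have h := T_contract hl0 hgK hfK hK0 ih u
      rw [hfx u, hfix u] at h
      calc |f u - f₀ u| ≤ lam * (lam ^ n * (f 0 + f₀ 0)) := h
        _ = lam ^ (n + 1) * (f 0 + f₀ 0) := by ring
  funext x
  have htend : Tendsto (fun n : ℕ => lam ^ n * (f 0 + f₀ 0)) atTop (𝓝 0) := by
    simpa using
      (tendsto_pow_atTop_nhds_zero_of_lt_one hl0.le hl1).mul_const (f 0 + f₀ 0)
  have h0 : |f x - f₀ x| ≤ 0 :=
    ge_of_tendsto htend (Eventually.of_forall fun n => key n x)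
  have h1 := abs_nonneg (f x - f₀ x)
  have := abs_eq_zero.mp (le_antisymm h0 h1)
  linarith
end
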